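/- arXiv:1403.2165 — 3 statements merged into one kernel-verified Lean document; each statement's English description precedes it below -/
import Mathlib

section
/- For every σ ∈ S_n, (Inv, Rmil, Lmap, Lmil)(σ) = (Sor, Cyc, Lmap, Lmic1)(φ(σ)); that is, Inv(σ) = Sor(φ(σ)), Rmil(σ) = Cyc(φ(σ)), Lmap(σ) = Lmap(φ(σ)), and Lmil(σ) = Lmic1(φ(σ)). -/
open scoped Classical

namespace SortIdx

variable {n : ℕ}

noncomputable section

/-- The inversion number `inv σ := #{(i,j) : i < j ∧ σ i > σ j}`. -/
def inv (σ : Equiv.Perm (Fin n)) : ℕ :=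
  (Finset.univ.filter (fun p : Fin n × Fin n => p.1 < p.2 ∧ σ p.2 < σ p.1)).card

/-- The inversion set `Inv σ := {(i,j) : i < j ∧ σ i > σ j}`. -/
def InvSet (σ : Equiv.Perm (Fin n)) : Finset (Fin n × Fin n) :=
  Finset.univ.filter (fun p : Fin n × Fin n => p.1 < p.2 ∧ σ p.2 < σ p.1)

/-- Right-to-left minimum letters. -/
def RmilSet (σ : Equiv.Perm (Fin n)) : Finset (Fin n) :=
  (Finset.univ.filter (fun i => ∀ j, i < j → σ i < σ j)).image σ

/-- The number of right-to-left minima. -/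
def rmin (σ : Equiv.Perm (Fin n)) : ℕ := (RmilSet σ).card

/-- Right-to-left minimum places. -/
def RmipSet (σ : Equiv.Perm (Fin n)) : Finset (Fin n) :=
  Finset.univ.filter (fun i => ∀ j, i < j → σ i < σ j)

/-- Right-to-left maximum letters. -/
def RmalSet (σ : Equiv.Perm (Fin n)) : Finset (Fin n) :=
  (Finset.univ.filter (fun i => ∀ j, i < j → σ j < σ i)).image σ

/-- The number of right-to-left maxima. -/
def rmax (σ : Equiv.Perm (Fin n)) : ℕ := (RmalSet σ).card

/-- Left-to-right minimum letters. -/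
def LmilSet (σ : Equiv.Perm (Fin n)) : Finset (Fin n) :=
  (Finset.univ.filter (fun i => ∀ j, j < i → σ i < σ j)).image σ

/-- The number of left-to-right minima. -/
def lmin (σ : Equiv.Perm (Fin n)) : ℕ := (LmilSet σ).card

/-- Left-to-right minimum places. -/
def LmipSet (σ : Equiv.Perm (Fin n)) : Finset (Fin n) :=
  Finset.univ.filter (fun i => ∀ j, j < i → σ i < σ j)

/-- Left-to-right maximum letters. -/
def LmalSet (σ : Equiv.Perm (Fin n)) : Finset (Fin n) :=
  (Finset.univ.filter (fun i => ∀ j, j < i → σ j < σ i)).image σ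

/-- The number of left-to-right maxima. -/
def lmax (σ : Equiv.Perm (Fin n)) : ℕ := (LmalSet σ).card

/-- Left-to-right maximum places. -/
def LmapSet (σ : Equiv.Perm (Fin n)) : Finset (Fin n) :=
  Finset.univ.filter (fun i => ∀ j, j < i → σ j < σ i)

/-- `Cyc σ`: the set of smallest elements of the cycles of `σ`
(`i` is smallest in its cycle iff `i ≤ σ^k i` for all `k`). -/
def CycSet (σ : Equiv.Perm (Fin n)) : Finset (Fin n) :=
  Finset.univ.filter (fun i => ∀ k : ℕ, i ≤ (σ ^ k) i)

/-- The number of cycles of `σ` (fixed points included). -/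
def cyc (σ : Equiv.Perm (Fin n)) : ℕ := (CycSet σ).card

/-- One step of the sorting process computing the sorting index: repeatedly
put the largest not-yet-fixed letter `j` in its place by the transposition
`(i j)` where `i = σ⁻¹ j` is the place of the letter `j`, recording the
distance `j - i`.  This produces the unique factorization
`σ = (i₁ j₁)(i₂ j₂)⋯(i_k j_k)` with `j₁ < ⋯ < j_k`, `i_r < j_r`, and sums
the `j_r - i_r`.  The fuel `n` is always sufficient. -/
def sorAux : ℕ → Equiv.Perm (Fin n) → ℕ
  | 0, _ => 0
  | (fuel + 1), σ =>
    if h : σ.support.Nonempty then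
      (((σ.support.max' h : Fin n) : ℕ) - ((σ⁻¹ (σ.support.max' h) : Fin n) : ℕ)) +
        sorAux fuel (σ * Equiv.swap (σ⁻¹ (σ.support.max' h)) (σ.support.max' h))
    else 0

/-- The sorting index of Petersen. -/
def sor (σ : Equiv.Perm (Fin n)) : ℕ := sorAux n σ

theorem bcode_exists (σ : Equiv.Perm (Fin n)) (i : Fin n) :
    ∃ k : ℕ, 0 < k ∧ (σ⁻¹ ^ k) i ≤ i := by
  refine ⟨orderOf σ⁻¹, orderOf_pos σ⁻¹, ?_⟩
  rw [pow_orderOf_eq_one]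
  simp

/-- The `B`-code of `σ`: `Bcode σ i = σ^(-k) i` where `k ≥ 1` is minimal with
`σ^(-k) i ≤ i`. -/
def Bcode (σ : Equiv.Perm (Fin n)) (i : Fin n) : Fin n :=
  (σ⁻¹ ^ (Nat.find (bcode_exists σ i))) i

/-- The `B`-code as a sequence in `L_n` (1-indexed values: the entry at place
`i` is the 1-indexed name of the letter `Bcode σ i`). -/
def BcodeNat (σ : Equiv.Perm (Fin n)) : Fin n → ℕ :=
  fun i => ((Bcode σ i : Fin n) : ℕ) + 1

/-- The Lehmer code: `Leh σ i = #{j : j ≤ i ∧ σ j ≤ σ i}` (1-indexed values). -/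
def Leh (σ : Equiv.Perm (Fin n)) : Fin n → ℕ :=
  fun i => (Finset.univ.filter (fun j => j ≤ i ∧ σ j ≤ σ i)).card

/-- The `A`-code: `A σ := Leh σ⁻¹`. -/
def Acode (σ : Equiv.Perm (Fin n)) : Fin n → ℕ := Leh σ⁻¹

/-- `O(code) := {i : code i = 1}` (for `1`-indexed codes in `L_n`). -/
def Oset (code : Fin n → ℕ) : Finset (Fin n) :=
  Finset.univ.filter (fun i => code i = 1)

/-- `Lmic1 σ := O(B σ)`, the set of places where the `B`-code equals `1`,
equivalently the left-to-right minima of the shifted cycle containing `1`. -/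
def Lmic1Set (σ : Equiv.Perm (Fin n)) : Finset (Fin n) :=
  Oset (BcodeNat σ)

/-- `lmic1 σ := #{i : (B σ)_i = 1}`. -/
def lmic1 (σ : Equiv.Perm (Fin n)) : ℕ := (Lmic1Set σ).card

/-- The bijection `φ = B⁻¹ ∘ A` of Foata–Han. -/
def phi (σ : Equiv.Perm (Fin n)) : Equiv.Perm (Fin n) :=
  Function.invFun BcodeNat (Acode σ)

/-- The algorithm computing the induced set of a code: the list argument is
the list of places still to process (from the last to the first), `S` is the
set of letters still available.  At place `i` we pick the `(code i)`-th
smallest element `l` of `S` (1-indexed), put the pairs `(l, j)` for `j ∈ S`,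
`j > l` into the answer and remove `l` from `S`. -/
def inducedAux : List (Fin n) → Finset (Fin n) → (Fin n → ℕ) → Finset (Fin n × Fin n)
  | [], _, _ => ∅
  | (i :: is), S, code =>
      ((S.filter (fun j => (S.sort (· ≤ ·)).getD (code i - 1) i < j)).image
          (fun j => ((S.sort (· ≤ ·)).getD (code i - 1) i, j))) ∪
        inducedAux is (S.erase ((S.sort (· ≤ ·)).getD (code i - 1) i)) code

/-- The induced set `⟨code⟩` of a code in `L_n`. -/
def induced (code : Fin n → ℕ) : Finset (Fin n × Fin n) :=
  inducedAux (List.finRange n).reverse Finset.univ code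

/-- The sorting set `Sor σ := ⟨B σ⟩`. -/
def SorSet (σ : Equiv.Perm (Fin n)) : Finset (Fin n × Fin n) :=
  induced (BcodeNat σ)

/-- The descent set (as a set of places `i`, `0`-indexed, such that
`σ i > σ (i+1)`). -/
def DesSet (σ : Equiv.Perm (Fin n)) : Finset (Fin n) :=
  Finset.univ.filter (fun i => ∃ h : (i : ℕ) + 1 < n, σ ⟨(i : ℕ) + 1, h⟩ < σ i)

/-- The major index (descents being counted `1`-indexed). -/
def maj (σ : Equiv.Perm (Fin n)) : ℕ :=
  ∑ i ∈ DesSet σ, ((i : ℕ) + 1)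

/-- The charge `chg σ := ∑_{i ∈ Des σ⁻¹} (n - i)` (descents `1`-indexed). -/
def chg (σ : Equiv.Perm (Fin n)) : ℕ :=
  ∑ i ∈ DesSet σ⁻¹, (n - ((i : ℕ) + 1))

/-- The reverse-complement of `σ` : `τ i = n + 1 - σ (n + 1 - i)` (1-indexed). -/
def revcomp (σ : Equiv.Perm (Fin n)) : Equiv.Perm (Fin n) :=
  Fin.revPerm * σ * Fin.revPerm

/-- The reverse major index `rmaj σ := maj (revcomp σ)`. -/
def rmaj (σ : Equiv.Perm (Fin n)) : ℕ := maj (revcomp σ)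

theorem Equiv.Perm.apply_inv_self {α : Type*} (f : Equiv.Perm α) (x : α) : f (f⁻¹ x) = x :=
  f.apply_symm_apply x

theorem Equiv.Perm.inv_apply_self {α : Type*} (f : Equiv.Perm α) (x : α) : f⁻¹ (f x) = x :=
  f.symm_apply_apply x


/-! ### Bcode characterization -/

theorem bcode_eq_of_chain (σ : Equiv.Perm (Fin n)) (i b : Fin n) (k : ℕ) (hk : 0 < k)
    (h1 : (σ⁻¹ ^ k) i = b) (h2 : b ≤ i) (h3 : ∀ j, 0 < j → j < k → i < (σ⁻¹ ^ j) i) :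
    Bcode σ i = b := by
  have hfind : Nat.find (bcode_exists σ i) = k := by
    rw [Nat.find_eq_iff]
    refine ⟨⟨hk, h1 ▸ h2⟩, ?_⟩
    rintro j hj ⟨hj0, hle⟩
    exact absurd (h3 j hj0 hj) (not_lt.2 hle)
  rw [Bcode, hfind, h1]

theorem bcode_chain (σ : Equiv.Perm (Fin n)) (i : Fin n) :
    ∃ k, 0 < k ∧ (σ⁻¹ ^ k) i = Bcode σ i ∧ Bcode σ i ≤ i ∧
      ∀ j, 0 < j → j < k → i < (σ⁻¹ ^ j) i := by
  have hspec := Nat.find_spec (bcode_exists σ i)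
  refine ⟨Nat.find (bcode_exists σ i), hspec.1, rfl, hspec.2, fun j hj0 hjK => ?_⟩
  have := Nat.find_min (bcode_exists σ i) hjK
  rw [not_and] at this
  exact lt_of_not_ge (this hj0)

theorem bcode_le (σ : Equiv.Perm (Fin n)) (i : Fin n) : Bcode σ i ≤ i :=
  (bcode_chain σ i).choose_spec.2.2.1

theorem pow_mul_fixed (σ : Equiv.Perm (Fin n)) (i : Fin n) (K : ℕ) (hfix : (σ ^ K) i = i) :
    ∀ q : ℕ, (σ ^ (K * q)) i = i := by
  intro q
  induction q with
  | zero => simp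
  | succ q ih =>
      rw [Nat.mul_succ, pow_add]
      simp only [Equiv.Perm.mul_apply, hfix]
      exact ih

theorem bcode_eq_self_iff (σ : Equiv.Perm (Fin n)) (i : Fin n) :
    Bcode σ i = i ↔ ∀ k : ℕ, i ≤ (σ ^ k) i := by
  constructor
  · intro h k
    obtain ⟨K, hK0, hKe, _, hmid⟩ := bcode_chain σ i
    rw [h] at hKe
    have hfix : (σ ^ K) i = i := by
      conv_lhs => rw [← hKe]
      rw [inv_pow]
      exact Equiv.Perm.apply_inv_self _ _
    have hr : ∀ r, r < K → i ≤ (σ ^ r) i := by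
      intro r hrK
      rcases Nat.eq_zero_or_pos r with h0 | h0
      · simp [h0]
      · have key : (σ ^ r) i = (σ⁻¹ ^ (K - r)) i := by
          have h2 : (σ⁻¹ ^ K) i = (σ⁻¹ ^ r) ((σ⁻¹ ^ (K - r)) i) := by
            rw [← Equiv.Perm.mul_apply, ← pow_add]
            congr 2
            omega
          have := congrArg (σ ^ r) (hKe.symm.trans h2)
          rw [inv_pow, Equiv.Perm.apply_inv_self] at this
          exact this
        rw [key]
        exact le_of_lt (hmid (K - r) (by omega) (by omega))
    have hmod : (σ ^ k) i = (σ ^ (k % K)) i := by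
      conv_lhs => rw [← Nat.mod_add_div k K, pow_add]
      simp only [Equiv.Perm.mul_apply]
      rw [pow_mul_fixed σ i K hfix]
    rw [hmod]
    exact hr _ (Nat.mod_lt _ hK0)
  · intro h
    obtain ⟨K, hK0, hKe, hle, _⟩ := bcode_chain σ i
    set o := orderOf σ with ho
    have hopos : 0 < o := orderOf_pos σ
    have hKle : K ≤ o * K := Nat.le_mul_of_pos_left _ hopos
    have hpow : σ⁻¹ ^ K = σ ^ (o * K - K) := by
      have h1 : σ ^ (o * K - K) * σ ^ K = 1 := by
        rw [← pow_add]
        have he : o * K - K + K = o * K := by omega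
        have hσo : σ ^ o = 1 := by rw [ho]; exact pow_orderOf_eq_one σ
        rw [he, pow_mul, hσo, one_pow]
      have h2 := eq_inv_of_mul_eq_one_left h1
      rw [← inv_pow] at h2
      exact h2.symm
    rw [hpow] at hKe
    exact le_antisymm hle (hKe ▸ h (o * K - K))

/-! ### A-code characterizations -/

theorem acode_def (σ : Equiv.Perm (Fin n)) (i : Fin n) :
    Acode σ i = (Finset.univ.filter (fun j => j ≤ i ∧ σ⁻¹ j ≤ σ⁻¹ i)).card := rfl

theorem acode_filter_subset (σ : Equiv.Perm (Fin n)) (i : Fin n) :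
    (Finset.univ.filter (fun j => j ≤ i ∧ σ⁻¹ j ≤ σ⁻¹ i)) ⊆ Finset.Iic i := by
  intro j hj
  simp only [Finset.mem_filter] at hj
  exact Finset.mem_Iic.2 hj.2.1

theorem acode_pos (σ : Equiv.Perm (Fin n)) (i : Fin n) : 1 ≤ Acode σ i := by
  rw [acode_def]
  refine Finset.card_pos.2 ⟨i, ?_⟩
  simp

theorem acode_le (σ : Equiv.Perm (Fin n)) (i : Fin n) : Acode σ i ≤ (i : ℕ) + 1 := by
  rw [acode_def]
  calc _ ≤ (Finset.Iic i).card := Finset.card_le_card (acode_filter_subset σ i)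
    _ = (i : ℕ) + 1 := Fin.card_Iic i

theorem acode_eq_succ_iff (σ : Equiv.Perm (Fin n)) (m : Fin n) :
    Acode σ m = (m : ℕ) + 1 ↔ ∀ j, j ≤ m → σ⁻¹ j ≤ σ⁻¹ m := by
  rw [acode_def]
  constructor
  · intro h j hj
    have heq : (Finset.univ.filter (fun j => j ≤ m ∧ σ⁻¹ j ≤ σ⁻¹ m)) = Finset.Iic m := by
      apply Finset.eq_of_subset_of_card_le (acode_filter_subset σ m)
      rw [Fin.card_Iic, h]
    have : j ∈ Finset.Iic m := Finset.mem_Iic.2 hj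
    rw [← heq, Finset.mem_filter] at this
    exact this.2.2
  · intro h
    have heq : (Finset.univ.filter (fun j => j ≤ m ∧ σ⁻¹ j ≤ σ⁻¹ m)) = Finset.Iic m := by
      apply Finset.Subset.antisymm (acode_filter_subset σ m)
      intro j hj
      rw [Finset.mem_Iic] at hj
      simp only [Finset.mem_filter, Finset.mem_univ, true_and]
      exact ⟨hj, h j hj⟩
    rw [heq, Fin.card_Iic]

theorem acode_eq_one_iff (σ : Equiv.Perm (Fin n)) (m : Fin n) :
    Acode σ m = 1 ↔ ∀ j, j < m → σ⁻¹ m < σ⁻¹ j := by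
  rw [acode_def]
  constructor
  · intro h j hj
    by_contra hc
    push_neg at hc
    have hsub : {j, m} ⊆ Finset.univ.filter (fun l => l ≤ m ∧ σ⁻¹ l ≤ σ⁻¹ m) := by
      intro x hx
      simp only [Finset.mem_insert, Finset.mem_singleton] at hx
      rcases hx with rfl | rfl
      · simp only [Finset.mem_filter, Finset.mem_univ, true_and]
        exact ⟨le_of_lt hj, hc⟩
      · simp
    have h2 : ({j, m} : Finset (Fin n)).card = 2 := by
      rw [Finset.card_insert_of_notMem (by simp [ne_of_lt hj]), Finset.card_singleton]
    have := Finset.card_le_card hsub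
    omega
  · intro h
    have heq : (Finset.univ.filter (fun l => l ≤ m ∧ σ⁻¹ l ≤ σ⁻¹ m)) = {m} := by
      apply Finset.Subset.antisymm
      · intro l hl
        simp only [Finset.mem_filter, Finset.mem_univ, true_and] at hl
        rcases lt_or_eq_of_le hl.1 with hlt | rfl
        · exact absurd hl.2 (not_le.2 (h l hlt))
        · simp
      · intro l hl
        simp only [Finset.mem_singleton] at hl
        subst hl
        simp
    rw [heq, Finset.card_singleton]

theorem mem_rmil_iff (σ : Equiv.Perm (Fin n)) (m : Fin n) :
    m ∈ RmilSet σ ↔ ∀ j, σ⁻¹ m < j → m < σ j := by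
  rw [RmilSet]
  simp only [Finset.mem_image, Finset.mem_filter, Finset.mem_univ, true_and]
  constructor
  · rintro ⟨i, hi, rfl⟩ j hj
    rw [Equiv.Perm.inv_apply_self] at hj
    exact hi j hj
  · intro h
    exact ⟨σ⁻¹ m, fun j hj => by simpa using h j hj, by simp⟩

theorem mem_lmil_iff (σ : Equiv.Perm (Fin n)) (m : Fin n) :
    m ∈ LmilSet σ ↔ ∀ j, j < σ⁻¹ m → m < σ j := by
  rw [LmilSet]
  simp only [Finset.mem_image, Finset.mem_filter, Finset.mem_univ, true_and]
  constructor
  · rintro ⟨i, hi, rfl⟩ j hj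
    rw [Equiv.Perm.inv_apply_self] at hj
    exact hi j hj
  · intro h
    exact ⟨σ⁻¹ m, fun j hj => by simpa using h j hj, by simp⟩

theorem rmil_eq_acode (σ : Equiv.Perm (Fin n)) :
    RmilSet σ = Finset.univ.filter (fun m => Acode σ m = (m : ℕ) + 1) := by
  ext m
  rw [Finset.mem_filter, mem_rmil_iff, acode_eq_succ_iff]
  simp only [Finset.mem_univ, true_and]
  constructor
  · intro h j hj
    by_contra hc
    push_neg at hc
    have := h _ hc
    rw [Equiv.Perm.apply_inv_self] at this
    exact absurd hj (not_le.2 this)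
  · intro h j hj
    rcases lt_trichotomy m (σ j) with h1 | h1 | h1
    · exact h1
    · exact absurd (h1 ▸ (Equiv.Perm.inv_apply_self σ j).symm ▸ rfl : σ⁻¹ m = j) (by
        intro he
        rw [h1] at hj
        rw [Equiv.Perm.inv_apply_self] at hj
        exact lt_irrefl _ hj)
    · have := h (σ j) (le_of_lt h1)
      rw [Equiv.Perm.inv_apply_self] at this
      exact absurd hj (not_lt.2 this)

theorem lmil_eq_oset_acode (σ : Equiv.Perm (Fin n)) :
    LmilSet σ = Oset (Acode σ) := by
  ext m
  rw [Oset, Finset.mem_filter, mem_lmil_iff, acode_eq_one_iff]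
  simp only [Finset.mem_univ, true_and]
  constructor
  · intro h j hj
    by_contra hc
    push_neg at hc
    rcases lt_or_eq_of_le hc with h2 | h2
    · have := h _ h2
      rw [Equiv.Perm.apply_inv_self] at this
      exact absurd hj (not_lt.2 (le_of_lt this))
    · exact absurd (σ⁻¹.injective h2) (ne_of_lt hj)
  · intro h j hj
    rcases lt_trichotomy m (σ j) with h1 | h1 | h1
    · exact h1
    · exfalso
      have : σ⁻¹ m = j := by rw [h1, Equiv.Perm.inv_apply_self]
      rw [this] at hj
      exact lt_irrefl _ hj
    · have := h (σ j) h1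
      rw [Equiv.Perm.inv_apply_self] at this
      exact absurd this (not_lt.2 (le_of_lt hj))

/-! ### Lmap via codes -/

def Fset (c : Fin n → ℕ) : Finset (Fin n) :=
  Finset.univ.filter (fun i => ∃ j, c j = (i : ℕ) + 1 ∧ ∀ k, j < k → (i : ℕ) + 1 < c k)

theorem mem_lmap_iff (σ : Equiv.Perm (Fin n)) (i : Fin n) :
    i ∈ LmapSet σ ↔ ∀ j, j < i → σ j < σ i := by
  simp [LmapSet]

theorem lmap_eq_fset_acode (σ : Equiv.Perm (Fin n)) :
    LmapSet σ = Fset (Acode σ) := by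
  have stepA : ∀ i : Fin n, ∀ j : Fin n, ((Acode σ j = (i : ℕ) + 1 ∧
      ∀ k, j < k → (i : ℕ) + 1 < Acode σ k)) → ∀ q : Fin n, j < σ q → i < q := by
    intro i j ⟨hj1, hj2⟩ q hq
    set Q := Finset.univ.filter (fun q : Fin n => j < σ q) with hQdef
    have hqQ : q ∈ Q := by simp [hQdef, hq]
    have hQne : Q.Nonempty := ⟨q, hqQ⟩
    set q0 := Q.min' hQne with hq0
    have hq0Q : q0 ∈ Q := Q.min'_mem hQne
    have hjk : j < σ q0 := by
      rw [hQdef] at hq0Q; simpa using hq0Q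
    set k := σ q0 with hk
    have hinvk : σ⁻¹ k = q0 := by rw [hk, Equiv.Perm.inv_apply_self]
    have hfilt : (Finset.univ.filter (fun l => l ≤ k ∧ σ⁻¹ l ≤ σ⁻¹ k))
        = (Finset.Iic q0).image σ := by
      apply Finset.Subset.antisymm
      · intro l hl
        simp only [Finset.mem_filter, Finset.mem_univ, true_and, hinvk] at hl
        exact Finset.mem_image.2 ⟨σ⁻¹ l, Finset.mem_Iic.2 hl.2, by simp⟩
      · intro l hl
        obtain ⟨p, hp, rfl⟩ := Finset.mem_image.1 hl
        rw [Finset.mem_Iic] at hp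
        simp only [Finset.mem_filter, Finset.mem_univ, true_and, hinvk,
          Equiv.Perm.inv_apply_self]
        refine ⟨?_, hp⟩
        rcases lt_or_eq_of_le hp with hlt | rfl
        · have hpQ : p ∉ Q := fun hc => absurd (Q.min'_le p hc) (not_le.2 hlt)
          rw [hQdef] at hpQ
          simp only [Finset.mem_filter, Finset.mem_univ, true_and, not_lt] at hpQ
          exact le_of_lt (lt_of_le_of_lt hpQ hjk)
        · exact le_refl _
    have hcard : Acode σ k = (q0 : ℕ) + 1 := by
      rw [acode_def, hfilt, Finset.card_image_of_injective _ σ.injective, Fin.card_Iic]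
    have := hj2 k hjk
    rw [hcard] at this
    have hiq0 : i < q0 := by
      rw [Fin.lt_def]; omega
    exact lt_of_lt_of_le hiq0 (Q.min'_le q hqQ)
  ext i
  rw [mem_lmap_iff, Fset, Finset.mem_filter]
  simp only [Finset.mem_univ, true_and]
  constructor
  · intro h
    have claim0 : ∀ q : Fin n, σ i < σ q → i < q := by
      intro q hq
      by_contra hc
      push_neg at hc
      rcases lt_or_eq_of_le hc with hlt | rfl
      · exact absurd (h q hlt) (not_lt.2 (le_of_lt hq))
      · exact lt_irrefl _ hq
    refine ⟨σ i, ?_, ?_⟩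
    · have hfilt : (Finset.univ.filter (fun l => l ≤ σ i ∧ σ⁻¹ l ≤ σ⁻¹ (σ i)))
          = (Finset.Iic i).image σ := by
        rw [Equiv.Perm.inv_apply_self]
        apply Finset.Subset.antisymm
        · intro l hl
          simp only [Finset.mem_filter, Finset.mem_univ, true_and] at hl
          exact Finset.mem_image.2 ⟨σ⁻¹ l, Finset.mem_Iic.2 hl.2, by simp⟩
        · intro l hl
          obtain ⟨p, hp, rfl⟩ := Finset.mem_image.1 hl
          rw [Finset.mem_Iic] at hp
          simp only [Finset.mem_filter, Finset.mem_univ, true_and,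
            Equiv.Perm.inv_apply_self]
          refine ⟨?_, hp⟩
          rcases lt_or_eq_of_le hp with hlt | rfl
          · exact le_of_lt (h p hlt)
          · exact le_refl _
      rw [acode_def, hfilt, Finset.card_image_of_injective _ σ.injective, Fin.card_Iic]
    · intro k hk
      have hik : i < σ⁻¹ k := by
        apply claim0
        rwa [Equiv.Perm.apply_inv_self]
      have hsub : insert k ((Finset.Iic i).image σ)
          ⊆ Finset.univ.filter (fun l => l ≤ k ∧ σ⁻¹ l ≤ σ⁻¹ k) := by
        intro l hl
        rcases Finset.mem_insert.1 hl with rfl | hl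
        · simp
        · obtain ⟨p, hp, rfl⟩ := Finset.mem_image.1 hl
          rw [Finset.mem_Iic] at hp
          simp only [Finset.mem_filter, Finset.mem_univ, true_and,
            Equiv.Perm.inv_apply_self]
          have h1 : σ p ≤ σ i := by
            rcases lt_or_eq_of_le hp with hlt | rfl
            · exact le_of_lt (h p hlt)
            · exact le_refl _
          exact ⟨le_of_lt (lt_of_le_of_lt h1 hk), le_of_lt (lt_of_le_of_lt hp hik)⟩
      have hnotmem : k ∉ (Finset.Iic i).image σ := by
        intro hc
        obtain ⟨p, hp, hpk⟩ := Finset.mem_image.1 hc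
        rw [Finset.mem_Iic] at hp
        have h1 : σ p ≤ σ i := by
          rcases lt_or_eq_of_le hp with hlt | rfl
          · exact le_of_lt (h p hlt)
          · exact le_refl _
        rw [hpk] at h1
        exact absurd hk (not_lt.2 h1)
      have hcard := Finset.card_le_card hsub
      rw [Finset.card_insert_of_notMem hnotmem,
        Finset.card_image_of_injective _ σ.injective, Fin.card_Iic] at hcard
      rw [acode_def]
      omega
  · rintro ⟨j, hj1, hj2⟩
    have hA := stepA i j ⟨hj1, hj2⟩
    -- step B : σ i = j
    set p := σ⁻¹ j with hp
    have hple : (i : ℕ) ≤ (p : ℕ) := by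
      have hsub2 : (Finset.univ.filter (fun l => l ≤ j ∧ σ⁻¹ l ≤ σ⁻¹ j))
          ⊆ (Finset.Iic p).image σ := by
        intro l hl
        simp only [Finset.mem_filter, Finset.mem_univ, true_and] at hl
        exact Finset.mem_image.2 ⟨σ⁻¹ l, Finset.mem_Iic.2 hl.2, by simp⟩
      have := Finset.card_le_card hsub2
      rw [← acode_def, hj1, Finset.card_image_of_injective _ σ.injective,
        Fin.card_Iic] at this
      omega
    have hsub3 : insert j ((Finset.Iic i).image σ)
        ⊆ Finset.univ.filter (fun l => l ≤ j ∧ σ⁻¹ l ≤ σ⁻¹ j) := by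
      intro l hl
      rcases Finset.mem_insert.1 hl with rfl | hl
      · simp
      · obtain ⟨q, hq, rfl⟩ := Finset.mem_image.1 hl
        rw [Finset.mem_Iic] at hq
        simp only [Finset.mem_filter, Finset.mem_univ, true_and,
          Equiv.Perm.inv_apply_self]
        have h1 : σ q ≤ j := by
          by_contra hc
          push_neg at hc
          exact absurd hq (not_le.2 (hA q hc))
        refine ⟨h1, ?_⟩
        calc q ≤ i := hq
          _ ≤ p := by rw [Fin.le_def]; exact hple
    have hpi : p = i := by
      by_contra hc
      have hilt : i < p := lt_of_le_of_ne (by rw [Fin.le_def]; exact hple) (Ne.symm hc)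
      have hnotmem : j ∉ (Finset.Iic i).image σ := by
        intro hmem
        obtain ⟨q, hq, hqj⟩ := Finset.mem_image.1 hmem
        rw [Finset.mem_Iic] at hq
        have : q = p := by
          apply σ.injective
          rw [hqj, hp, Equiv.Perm.apply_inv_self]
        rw [this] at hq
        exact absurd hilt (not_lt.2 hq)
      have hcard := Finset.card_le_card hsub3
      rw [Finset.card_insert_of_notMem hnotmem,
        Finset.card_image_of_injective _ σ.injective, Fin.card_Iic, ← acode_def, hj1] at hcard
      omega
    have hsi : σ i = j := by rw [← hpi, hp, Equiv.Perm.apply_inv_self]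
    intro q hq
    rw [hsi]
    have h1 : σ q ≤ j := by
      by_contra hc
      push_neg at hc
      exact absurd hq (not_lt.2 (le_of_lt (hA q hc)))
    rcases lt_or_eq_of_le h1 with hlt | heq
    · exact hlt
    · exfalso
      have : q = i := σ.injective (by rw [heq, hsi])
      rw [this] at hq
      exact lt_irrefl _ hq

/-! ### Bcode under composition with a swap -/

theorem mulswap_inv_apply (σ : Equiv.Perm (Fin n)) (b m x : Fin n) :
    (σ * Equiv.swap b m)⁻¹ x = Equiv.swap b m (σ⁻¹ x) := by
  rw [mul_inv_rev, Equiv.Perm.mul_apply, Equiv.swap_inv]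

theorem perm_pow_succ (τ : Equiv.Perm (Fin n)) (j : ℕ) (x : Fin n) :
    (τ ^ (j + 1)) x = τ ((τ ^ j) x) := by
  rw [pow_succ']; rfl

theorem bcode_mulswap_eq_self (σ : Equiv.Perm (Fin n)) (b m : Fin n) (hbm : b < m)
    (i : Fin n) (him : m < i) (hi : Bcode σ i = i) :
    Bcode (σ * Equiv.swap b m) i = i := by
  obtain ⟨K, hK0, hKe, _, hmid⟩ := bcode_chain σ i
  rw [hi] at hKe
  have claim : ∀ j, j ≤ K → ((σ * Equiv.swap b m)⁻¹ ^ j) i = (σ⁻¹ ^ j) i := by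
    intro j hj
    induction j with
    | zero => simp
    | succ j ih =>
        rw [perm_pow_succ, ih (by omega), mulswap_inv_apply, ← perm_pow_succ]
        have hval : m < (σ⁻¹ ^ (j + 1)) i := by
          rcases eq_or_lt_of_le hj with heq | hlt
          · rw [heq, hKe]; exact him
          · exact lt_trans him (hmid (j + 1) (by omega) hlt)
        exact Equiv.swap_apply_of_ne_of_ne (ne_of_gt (lt_trans hbm hval)) (ne_of_gt hval)
  apply bcode_eq_of_chain _ _ _ K hK0
  · rw [claim K le_rfl, hKe]
  · exact le_refl _
  · intro j hj0 hjK
    rw [claim j (le_of_lt hjK)]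
    exact hmid j hj0 hjK

theorem bcode_mulswap_at (σ : Equiv.Perm (Fin n)) (b m : Fin n) (hbm : b < m)
    (hm : Bcode σ m = m) :
    Bcode (σ * Equiv.swap b m) m = b := by
  obtain ⟨K, hK0, hKe, _, hmid⟩ := bcode_chain σ m
  rw [hm] at hKe
  have claim : ∀ j, j < K → ((σ * Equiv.swap b m)⁻¹ ^ j) m = (σ⁻¹ ^ j) m := by
    intro j hj
    induction j with
    | zero => simp
    | succ j ih =>
        rw [perm_pow_succ, ih (by omega), mulswap_inv_apply, ← perm_pow_succ]
        have hval : m < (σ⁻¹ ^ (j + 1)) m := hmid (j + 1) (by omega) hj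
        exact Equiv.swap_apply_of_ne_of_ne (ne_of_gt (lt_trans hbm hval)) (ne_of_gt hval)
  apply bcode_eq_of_chain _ _ _ K hK0
  · have hK1 : K - 1 + 1 = K := by omega
    rw [← hK1, perm_pow_succ, claim (K - 1) (by omega), mulswap_inv_apply, ← perm_pow_succ,
      hK1, hKe, Equiv.swap_apply_right]
  · exact le_of_lt hbm
  · intro j hj0 hjK
    rw [claim j hjK]
    exact hmid j hj0 hjK

theorem bcode_mulswap_lt (σ : Equiv.Perm (Fin n)) (b m : Fin n) (hbm : b < m)
    (hm : Bcode σ m = m) (i : Fin n) (him : i < m) :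
    Bcode (σ * Equiv.swap b m) i = Bcode σ i := by
  obtain ⟨K, hK0, hKe, hle, hmid⟩ := bcode_chain σ i
  obtain ⟨C, hC0, hCe, _, hCmid⟩ := bcode_chain σ m
  rw [hm] at hCe
  set v := Bcode σ i with hv
  set x : ℕ → Fin n := fun j => (σ⁻¹ ^ j) i with hx
  set y : ℕ → Fin n := fun j => (σ⁻¹ ^ j) m with hy
  have hx0 : x 0 = i := by simp [hx]; rfl
  have hy0 : y 0 = m := by simp [hy]; rfl
  have hxK : x K = v := hKe
  have hxsucc : ∀ j, x (j + 1) = σ⁻¹ (x j) := fun j => perm_pow_succ σ⁻¹ j i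
  have hysucc : ∀ j, y (j + 1) = σ⁻¹ (y j) := fun j => perm_pow_succ σ⁻¹ j m
  have hyC : y C = m := hCe
  have hyge : ∀ r, r < C → m ≤ y r := by
    intro r hr
    rcases Nat.eq_zero_or_pos r with rfl | hr0
    · rw [hy0]
    · exact le_of_lt (hCmid r hr0 hr)
  -- m never occurs in the chain of i
  have hmx : ∀ T, 0 < T → T ≤ K → x T ≠ m := by
    intro T hT0 hTK hxT
    have hper : ∀ u, ∃ r, r < C ∧ x (T + u) = y r := by
      intro u
      induction u with
      | zero => exact ⟨0, hC0, by rw [hy0]; simpa using hxT⟩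
      | succ u ih =>
          obtain ⟨r, hr, hxu⟩ := ih
          rcases Nat.lt_or_ge (r + 1) C with hlt | hge
          · exact ⟨r + 1, hlt, by rw [show T + (u+1) = (T+u)+1 by omega, hxsucc, hxu, hysucc]⟩
          · have hrC : r + 1 = C := by omega
            refine ⟨0, hC0, ?_⟩
            rw [show T + (u+1) = (T+u)+1 by omega, hxsucc, hxu, ← hysucc, hrC, hyC, hy0]
    obtain ⟨r, hr, hxKr⟩ := hper (K - T)
    rw [show T + (K - T) = K by omega, hxK] at hxKr
    have : m ≤ v := hxKr ▸ hyge r hr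
    exact absurd (lt_of_le_of_lt this (lt_of_le_of_lt hle him)) (lt_irrefl m)
  -- chain values of i are pairwise distinct (for b-uniqueness)
  have hxinj : ∀ T T', 0 < T → T < T' → T' ≤ K → x T ≠ x T' := by
    intro T T' hT0 hTT' hT'K hEq
    set d := T' - T with hd
    have hdpos : 0 < d := by omega
    have hdK : d < K := by omega
    have h1 : x T' = (σ⁻¹ ^ T) ((σ⁻¹ ^ d) i) := by
      rw [hx]
      show (σ⁻¹ ^ T') i = _
      rw [← Equiv.Perm.mul_apply, ← pow_add, show T + d = T' by omega]
    have h2 : (σ⁻¹ ^ T) ((σ⁻¹ ^ d) i) = (σ⁻¹ ^ T) i := by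
      rw [← h1, ← hEq]
    have h3 : (σ⁻¹ ^ d) i = i := (Equiv.injective _) h2
    have := hmid d hdpos hdK
    rw [hx] at *
    exact absurd h3 (ne_of_gt this)
  set s := Equiv.swap b m with hs
  by_cases hbocc : ∃ T, 0 < T ∧ T ≤ K ∧ x T = b
  · -- b occurs in the chain : detour through the cycle of m
    have hbex : ∃ T, 0 < T ∧ T ≤ K ∧ x T = b := hbocc
    set T := Nat.find hbex with hT
    obtain ⟨hT0, hTK, hxT⟩ := Nat.find_spec hbex
    have hTmin : ∀ j, 0 < j → j < T → x j ≠ b := by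
      intro j hj0 hjT hxj
      exact Nat.find_min hbex hjT ⟨hj0, by omega, hxj⟩
    have hbuniq : ∀ j, T < j → j ≤ K → x j ≠ b := by
      intro j hTj hjK hxj
      exact hxinj T j hT0 hTj hjK (hxT.trans hxj.symm)
    set w : ℕ → Fin n := fun j => if j < T then x j else if j < T + C then y (j - T) else x (j - C)
      with hw
    have hwlow : ∀ j, j < T → w j = x j := by intro j hj; simp [hw, hj]
    have hwmid : ∀ j, T ≤ j → j < T + C → w j = y (j - T) := by
      intro j h1 h2; simp [hw, Nat.not_lt.2 h1, h2]
    have hwhigh : ∀ j, T + C ≤ j → w j = x (j - C) := by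
      intro j h1
      have h2 : ¬ j < T := by omega
      have h3 : ¬ j < T + C := by omega
      simp [hw, h2, h3]
    have hybm : ∀ r, 0 < r → r < C → y r ≠ b ∧ y r ≠ m := by
      intro r hr0 hrC
      have := hCmid r hr0 hrC
      exact ⟨ne_of_gt (lt_trans hbm this), ne_of_gt this⟩
    have hchain : ∀ j, j ≤ K + C → ((σ * s)⁻¹ ^ j) i = w j := by
      intro j hj
      induction j with
      | zero => rw [hwlow 0 hT0]; simp [hx]; rfl
      | succ j ih =>
          rw [perm_pow_succ, ih (by omega), mulswap_inv_apply, ← hs]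
          rcases Nat.lt_or_ge (j + 1) T with hc1 | hc1
          · -- (a)
            rw [hwlow j (by omega), ← hxsucc, hwlow (j+1) hc1]
            apply Equiv.swap_apply_of_ne_of_ne
            · exact hTmin (j+1) (by omega) hc1
            · exact hmx (j+1) (by omega) (by omega)
          rcases Nat.eq_or_lt_of_le hc1 with hc2 | hc2
          · -- (b) j + 1 = T
            rw [hwlow j (by omega), ← hxsucc, ← hc2, hxT, hwmid T le_rfl (by omega),
              Nat.sub_self, hy0]
            exact Equiv.swap_apply_left b m
          rcases Nat.lt_or_ge (j + 1) (T + C) with hc3 | hc3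
          · -- (c)
            rw [hwmid j (by omega) (by omega), ← hysucc, hwmid (j+1) (by omega) hc3,
              show j - T + 1 = j + 1 - T by omega]
            have := hybm (j + 1 - T) (by omega) (by omega)
            exact Equiv.swap_apply_of_ne_of_ne this.1 this.2
          rcases Nat.eq_or_lt_of_le hc3 with hc4 | hc4
          · -- (d) j + 1 = T + C
            rw [hwmid j (by omega) (by omega), ← hysucc,
              show j - T + 1 = C by omega, hyC, hwhigh (j+1) (by omega),
              show j + 1 - C = T by omega, hxT]
            exact Equiv.swap_apply_right b m
          · -- (e)
            rw [hwhigh j (by omega), ← hxsucc, hwhigh (j+1) (by omega),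
              show j - C + 1 = j + 1 - C by omega]
            apply Equiv.swap_apply_of_ne_of_ne
            · exact hbuniq (j + 1 - C) (by omega) (by omega)
            · exact hmx (j + 1 - C) (by omega) (by omega)
    apply bcode_eq_of_chain _ _ _ (K + C) (by omega)
    · rw [hchain (K + C) le_rfl, hwhigh (K + C) (by omega), Nat.add_sub_cancel, hxK]
    · exact hle
    · intro j hj0 hjKC
      rw [hchain j (by omega)]
      rcases Nat.lt_or_ge j T with h1 | h1
      · rw [hwlow j h1]
        exact hmid j hj0 (by omega)
      rcases Nat.lt_or_ge j (T + C) with h2 | h2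
      · rw [hwmid j h1 h2]
        exact lt_of_lt_of_le him (hyge (j - T) (by omega))
      · rw [hwhigh j h2]
        exact hmid (j - C) (by omega) (by omega)
  · -- b does not occur : chains are identical
    push_neg at hbocc
    have hchain : ∀ j, j ≤ K → ((σ * s)⁻¹ ^ j) i = x j := by
      intro j hj
      induction j with
      | zero => simp [hx]; rfl
      | succ j ih =>
          rw [perm_pow_succ, ih (by omega), mulswap_inv_apply, ← hs, ← hxsucc]
          apply Equiv.swap_apply_of_ne_of_ne
          · exact hbocc (j+1) (by omega) (by omega)
          · exact hmx (j+1) (by omega) (by omega)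
    apply bcode_eq_of_chain _ _ _ K hK0
    · rw [hchain K le_rfl, hxK]
    · exact hle
    · intro j hj0 hjK
      rw [hchain j (by omega)]
      exact hmid j hj0 hjK

/-! ### The inverse construction ψ -/

def psiN (d : Fin n → Fin n) : ℕ → Equiv.Perm (Fin n)
  | 0 => 1
  | (t+1) => if h : t < n then psiN d t * Equiv.swap (d ⟨t, h⟩) ⟨t, h⟩ else psiN d t

theorem psi_fix (d : Fin n → Fin n) (hd : ∀ i, d i ≤ i) :
    ∀ t, ∀ x : Fin n, t ≤ (x : ℕ) → psiN d t x = x := by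
  intro t
  induction t with
  | zero => intro x _; rfl
  | succ t ih =>
      intro x hx
      rw [psiN]
      by_cases h : t < n
      · rw [dif_pos h, Equiv.Perm.mul_apply]
        have h1 : x ≠ (⟨t, h⟩ : Fin n) := by
          intro hc; rw [hc] at hx; simp at hx
        have h2 : x ≠ d ⟨t, h⟩ := by
          have h3 : (d ⟨t, h⟩ : ℕ) ≤ t := by simpa [Fin.le_def] using hd ⟨t, h⟩
          intro hc
          rw [hc] at hx
          omega
        rw [Equiv.swap_apply_of_ne_of_ne h2 h1]
        exact ih x (by omega)
      · rw [dif_neg h]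
        exact ih x (by omega)

theorem psi_lt (d : Fin n → Fin n) (hd : ∀ i, d i ≤ i) :
    ∀ t, ∀ x : Fin n, (x : ℕ) < t → (psiN d t x : ℕ) < t := by
  intro t x hx
  by_contra hc
  push_neg at hc
  have h1 : psiN d t (psiN d t x) = psiN d t x := psi_fix d hd t _ hc
  have h2 : psiN d t x = x := (psiN d t).injective h1
  rw [h2] at hc
  omega

theorem psi_bcode (d : Fin n → Fin n) (hd : ∀ i, d i ≤ i) :
    ∀ t, ∀ i : Fin n, Bcode (psiN d t) i = if (i : ℕ) < t then d i else i := by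
  intro t
  induction t with
  | zero =>
      intro i
      rw [if_neg (by omega)]
      apply bcode_eq_of_chain _ _ _ 1 one_pos
      · simp [psiN]
      · exact le_refl _
      · intro j hj0 hj1; omega
  | succ t ih =>
      intro i
      by_cases h : t < n
      · set m' : Fin n := ⟨t, h⟩ with hm'
        have hbodym : Bcode (psiN d t) m' = m' := by rw [ih m', if_neg (by simp [hm'])]
        rcases eq_or_lt_of_le (hd m') with heq | hlt
        · -- trivial swap
          have hswap : Equiv.swap (d m') m' = 1 := by rw [heq]; exact Equiv.swap_self m'
          rw [psiN, dif_pos h, ← hm', hswap, mul_one, ih i]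
          by_cases hi : (i : ℕ) < t
          · rw [if_pos hi, if_pos (by omega)]
          · rcases Nat.eq_or_lt_of_le (Nat.not_lt.1 hi) with heq2 | hlt2
            · have hieq : i = m' := by apply Fin.ext; simp [hm', ← heq2]
              rw [if_neg (by omega), if_pos (by omega), hieq, heq]
            · rw [if_neg (by omega), if_neg (by omega)]
        · -- real swap
          rw [psiN, dif_pos h, ← hm']
          by_cases hi : (i : ℕ) < t
          · rw [if_pos (by omega)]
            rw [bcode_mulswap_lt _ _ _ hlt hbodym i (by rw [Fin.lt_def]; simpa [hm'] using hi)]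
            rw [ih i, if_pos hi]
          · rcases Nat.eq_or_lt_of_le (Nat.not_lt.1 hi) with heq2 | hlt2
            · have hieq : i = m' := by apply Fin.ext; simp [hm', ← heq2]
              rw [hieq, if_pos (by simp [hm'])]
              exact bcode_mulswap_at _ _ _ hlt hbodym
            · rw [if_neg (by omega)]
              apply bcode_mulswap_eq_self _ _ _ hlt i (by rw [Fin.lt_def]; simpa [hm'] using hlt2)
              rw [ih i, if_neg hi]
      · rw [psiN, dif_neg h, ih i]
        have hn : (i : ℕ) < n := i.isLt
        rw [if_pos (by omega), if_pos (by omega)]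

/-! ### Bijectivity of the B-code -/

theorem prod_range_id_succ : ∀ N : ℕ, ∏ i ∈ Finset.range N, (i + 1) = N.factorial := by
  intro N
  induction N with
  | zero => simp
  | succ N ih => rw [Finset.prod_range_succ, ih, Nat.factorial_succ, mul_comm]

def toPi (σ : Equiv.Perm (Fin n)) : ∀ i : Fin n, Fin ((i : ℕ) + 1) :=
  fun i => ⟨(Bcode σ i : ℕ), by
    have := bcode_le σ i
    rw [Fin.le_def] at this
    omega⟩

def fromPi (c : ∀ i : Fin n, Fin ((i : ℕ) + 1)) : Equiv.Perm (Fin n) :=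
  psiN (fun i => ⟨(c i : ℕ), by have := (c i).isLt; omega⟩) n

theorem toPi_fromPi (c : ∀ i : Fin n, Fin ((i : ℕ) + 1)) : toPi (fromPi c) = c := by
  funext i
  have hd : ∀ i : Fin n, (⟨(c i : ℕ), by have := (c i).isLt; omega⟩ : Fin n) ≤ i := by
    intro i
    rw [Fin.le_def]
    have := (c i).isLt
    simpa using by omega
  have := psi_bcode _ hd n i
  rw [if_pos i.isLt] at this
  rw [toPi]
  ext
  show ((Bcode (fromPi c) i : Fin n) : ℕ) = (c i : ℕ)
  rw [fromPi, this]

theorem fromPi_bijective : Function.Bijective (fromPi (n := n)) := by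
  rw [Fintype.bijective_iff_injective_and_card]
  constructor
  · intro c c' h
    rw [← toPi_fromPi c, ← toPi_fromPi c', h]
  · rw [Fintype.card_perm, Fintype.card_pi, Fintype.card_fin]
    have : ∀ i : Fin n, Fintype.card (Fin ((i : ℕ) + 1)) = (i : ℕ) + 1 := fun i =>
      Fintype.card_fin _
    rw [Finset.prod_congr rfl (fun i _ => this i), ← prod_range_id_succ n]
    exact (Finset.prod_range fun i => i + 1).symm

/-! ### phi and its B-code -/

def acodeF (σ : Equiv.Perm (Fin n)) : Fin n → Fin n :=
  fun i => ⟨Acode σ i - 1, by have h1 := acode_le σ i; have := i.isLt; omega⟩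

theorem acodeF_le (σ : Equiv.Perm (Fin n)) (i : Fin n) : acodeF σ i ≤ i := by
  rw [Fin.le_def, acodeF]
  have := acode_le σ i
  simp only
  omega

theorem acodeF_nat (σ : Equiv.Perm (Fin n)) (i : Fin n) :
    (acodeF σ i : ℕ) + 1 = Acode σ i := by
  rw [acodeF]
  have := acode_pos σ i
  simp only
  omega

theorem bcode_psi_acode (σ : Equiv.Perm (Fin n)) :
    ∀ i, Bcode (psiN (acodeF σ) n) i = acodeF σ i := by
  intro i
  rw [psi_bcode (acodeF σ) (acodeF_le σ) n i, if_pos i.isLt]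

theorem bcodeNat_psi_acode (σ : Equiv.Perm (Fin n)) :
    BcodeNat (psiN (acodeF σ) n) = Acode σ := by
  funext i
  rw [BcodeNat, bcode_psi_acode, acodeF_nat]

theorem toPi_injective : Function.Injective (toPi (n := n)) := by
  intro a b h
  obtain ⟨c, rfl⟩ := fromPi_bijective.2 a
  obtain ⟨c', rfl⟩ := fromPi_bijective.2 b
  rw [toPi_fromPi, toPi_fromPi] at h
  rw [h]

theorem bcodeNat_phi (σ : Equiv.Perm (Fin n)) : BcodeNat (phi σ) = Acode σ :=
  Function.invFun_eq ⟨psiN (acodeF σ) n, bcodeNat_psi_acode σ⟩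

theorem phi_eq_psi (σ : Equiv.Perm (Fin n)) : phi σ = psiN (acodeF σ) n := by
  apply toPi_injective
  funext i
  have h1 : BcodeNat (phi σ) i = BcodeNat (psiN (acodeF σ) n) i := by
    rw [bcodeNat_phi, bcodeNat_psi_acode]
  rw [BcodeNat, BcodeNat] at h1
  ext
  show ((Bcode (phi σ) i : Fin n) : ℕ) = ((Bcode (psiN (acodeF σ) n) i : Fin n) : ℕ)
  omega

/-! ### Cyc, Rmil, Lmil assembly -/

theorem cyc_eq_bcode (τ : Equiv.Perm (Fin n)) :
    CycSet τ = Finset.univ.filter (fun i => BcodeNat τ i = (i : ℕ) + 1) := by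
  ext i
  rw [CycSet, Finset.mem_filter, Finset.mem_filter, BcodeNat]
  constructor
  · rintro ⟨h1, h2⟩
    refine ⟨h1, ?_⟩
    have := (bcode_eq_self_iff τ i).2 h2
    rw [this]
  · rintro ⟨h1, h2⟩
    refine ⟨h1, (bcode_eq_self_iff τ i).1 ?_⟩
    ext
    omega

theorem rmil_thm (σ : Equiv.Perm (Fin n)) : RmilSet σ = CycSet (phi σ) := by
  rw [rmil_eq_acode, cyc_eq_bcode, ← bcodeNat_phi σ]

theorem lmil_thm (σ : Equiv.Perm (Fin n)) : LmilSet σ = Lmic1Set (phi σ) := by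
  rw [lmil_eq_oset_acode, Lmic1Set, ← bcodeNat_phi σ]

/-! ### Lmap along the psi construction -/

def FsetF (d : Fin n → Fin n) : Finset (Fin n) :=
  Finset.univ.filter (fun i => ∃ j, d j = i ∧ ∀ k, j < k → i < d k)

theorem mem_fsetF (d : Fin n → Fin n) (i : Fin n) :
    i ∈ FsetF d ↔ ∃ j, d j = i ∧ ∀ k, j < k → i < d k := by
  simp [FsetF]

theorem fset_nat (d : Fin n → Fin n) :
    Fset (fun k => (d k : ℕ) + 1) = FsetF d := by
  ext i
  rw [mem_fsetF, Fset, Finset.mem_filter]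
  simp only [Finset.mem_univ, true_and]
  constructor
  · rintro ⟨j, h1, h2⟩
    exact ⟨j, Fin.ext (by omega), fun k hk => by rw [Fin.lt_def]; have := h2 k hk; omega⟩
  · rintro ⟨j, h1, h2⟩
    refine ⟨j, by rw [h1], fun k hk => ?_⟩
    have := h2 k hk
    rw [Fin.lt_def] at this
    omega

theorem psi_lmap (d : Fin n → Fin n) (hd : ∀ i, d i ≤ i) :
    ∀ t, LmapSet (psiN d t) = FsetF (fun i => if (i : ℕ) < t then d i else i) := by
  intro t
  induction t with
  | zero =>
      ext i
      rw [mem_lmap_iff, mem_fsetF]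
      simp only [Nat.not_lt_zero, if_false, psiN, Equiv.Perm.one_apply]
      constructor
      · intro _; exact ⟨i, rfl, fun k hk => hk⟩
      · intro _ j hj; exact hj
  | succ t ih =>
      by_cases h : t < n
      case neg =>
        rw [psiN, dif_neg h]
        rw [ih]
        congr 1
        funext i
        have : (i : ℕ) < t := by have := i.isLt; omega
        rw [if_pos this, if_pos (by omega)]
      case pos =>
      set m' : Fin n := ⟨t, h⟩ with hm'
      have hm't : (m' : ℕ) = t := rfl
      rcases eq_or_lt_of_le (hd m') with heq | hlt
      · -- d m' = m' : the swap is trivial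
        have hswap : Equiv.swap (d m') m' = 1 := by rw [heq]; exact Equiv.swap_self m'
        rw [psiN, dif_pos h, ← hm', hswap, mul_one, ih]
        congr 1
        funext i
        rcases Nat.lt_trichotomy (i : ℕ) t with h1 | h1 | h1
        · rw [if_pos h1, if_pos (by omega)]
        · have : i = m' := by apply Fin.ext; rw [hm't, h1]
          rw [if_neg (by omega), if_pos (by omega), this, heq]
        · rw [if_neg (by omega), if_neg (by omega)]
      · -- real swap
        set b := d m' with hb
        set σ' := psiN d t with hσ'
        have hσdef : psiN d (t + 1) = σ' * Equiv.swap b m' := by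
          rw [psiN, dif_pos h, ← hm', ← hb, ← hσ']
        have hbt : (b : ℕ) < t := by
          have := hlt; rw [Fin.lt_def, hm't] at this; exact this
        have happ : ∀ p : Fin n, psiN d (t + 1) p = σ' (Equiv.swap b m' p) := by
          intro p; rw [hσdef]; rfl
        have hσb : psiN d (t + 1) b = m' := by
          rw [happ, Equiv.swap_apply_left]
          exact psi_fix d hd t m' (by rw [hm't])
        have hσm : psiN d (t + 1) m' = σ' b := by rw [happ, Equiv.swap_apply_right]
        have hσother : ∀ p, p ≠ b → p ≠ m' → psiN d (t + 1) p = σ' p := by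
          intro p h1 h2; rw [happ, Equiv.swap_apply_of_ne_of_ne h1 h2]
        have hσ'lt : ∀ p : Fin n, (p : ℕ) < t → (σ' p : ℕ) < t := fun p hp => psi_lt d hd t p hp
        have hσfix : ∀ p : Fin n, t + 1 ≤ (p : ℕ) → psiN d (t + 1) p = p := fun p hp =>
          psi_fix d hd (t + 1) p hp
        have hσlt : ∀ p : Fin n, (p : ℕ) < t + 1 → (psiN d (t + 1) p : ℕ) < t + 1 := fun p hp =>
          psi_lt d hd (t + 1) p hp
        -- the common right-hand side
        have claim1 : ∀ i : Fin n, i ∈ LmapSet (psiN d (t + 1)) ↔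
            ((i < b ∧ i ∈ LmapSet σ') ∨ i = b ∨ m' < i) := by
          intro i
          rw [mem_lmap_iff]
          rcases lt_trichotomy i b with hib | hib | hib
          · -- i < b : same as σ'
            have hit : (i : ℕ) < t := by
              rw [Fin.lt_def] at hib; omega
            have hieq : psiN d (t + 1) i = σ' i := hσother i (ne_of_lt hib)
              (ne_of_lt (lt_trans hib hlt))
            constructor
            · intro hin
              refine Or.inl ⟨hib, (mem_lmap_iff σ' i).2 fun j hj => ?_⟩
              have hj' : psiN d (t + 1) j = σ' j := hσother j (ne_of_lt (lt_trans hj hib))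
                (ne_of_lt (lt_trans (lt_trans hj hib) hlt))
              rw [← hj', ← hieq]
              exact hin j hj
            · rintro (⟨_, hin⟩ | rfl | hin)
              · intro j hj
                have hj' : psiN d (t + 1) j = σ' j := hσother j (ne_of_lt (lt_trans hj hib))
                  (ne_of_lt (lt_trans (lt_trans hj hib) hlt))
                rw [hj', hieq]
                exact (mem_lmap_iff σ' i).1 hin j hj
              · exact absurd hib (lt_irrefl _)
              · exact absurd (lt_trans (lt_trans hib hlt) hin) (lt_irrefl i)
          · -- i = b : always a left-to-right max place
            subst hib
            constructor
            · intro _; exact Or.inr (Or.inl rfl)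
            · intro _ j hj
              have hj' : psiN d (t + 1) j = σ' j := hσother j (ne_of_lt hj) (ne_of_lt (lt_trans hj hlt))
              rw [hj', hσb, Fin.lt_def, hm't]
              exact hσ'lt j (by rw [Fin.lt_def] at hj; omega)
          · rcases lt_or_ge m' i with him | him
            · -- i > m' : always max place
              constructor
              · intro _; exact Or.inr (Or.inr him)
              · intro _ j hj
                rw [hσfix i (by rw [Fin.lt_def, hm't] at him; omega)]
                rcases Nat.lt_or_ge (j : ℕ) (t + 1) with hjt | hjt
                · have := hσlt j hjt
                  rw [Fin.lt_def]
                  rw [Fin.lt_def, hm't] at him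
                  omega
                · rw [psi_fix d hd (t+1) j hjt]
                  exact hj
            · -- b < i ≤ m' : never a max place
              have hnot : ¬ (∀ j, j < i → psiN d (t + 1) j < psiN d (t + 1) i) := by
                intro hc
                have hbi : b < i := hib
                have := hc b hbi
                rw [hσb] at this
                have hival : (psiN d (t + 1) i : ℕ) < t := by
                  rcases eq_or_lt_of_le him with he | hl
                  · rw [he, hσm]
                    exact hσ'lt b hbt
                  · rw [hσother i (ne_of_gt hib) (ne_of_lt hl)]
                    exact hσ'lt i (by rw [Fin.lt_def, hm't] at hl; omega)
                rw [Fin.lt_def, hm't] at this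
                omega
              constructor
              · intro hc; exact absurd hc hnot
              · rintro (⟨hc, _⟩ | rfl | hc)
                · exact absurd hib (not_lt.2 (le_of_lt hc))
                · exact absurd hib (lt_irrefl _)
                · exact absurd hc (not_lt.2 him)
        have claim2 : ∀ i : Fin n, i ∈ FsetF (fun p => if (p : ℕ) < t + 1 then d p else p) ↔
            ((i < b ∧ i ∈ FsetF (fun p => if (p : ℕ) < t then d p else p)) ∨ i = b ∨ m' < i) := by
          intro i
          set e : Fin n → Fin n := fun p => if (p : ℕ) < t + 1 then d p else p with he
          set dt : Fin n → Fin n := fun p => if (p : ℕ) < t then d p else p with hdt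
          have hem : e m' = b := by rw [he]; simp only [hm't]; rw [if_pos (by omega)]
          have hehigh : ∀ k, m' < k → e k = k := by
            intro k hk
            rw [Fin.lt_def, hm't] at hk
            rw [he]; simp only; rw [if_neg (by omega)]
          have helow : ∀ j, j < m' → e j = dt j := by
            intro j hj
            rw [Fin.lt_def, hm't] at hj
            rw [he, hdt]; simp only; rw [if_pos (by omega), if_pos hj]
          have hdtm : dt m' = m' := by rw [hdt]; simp only [hm't]; rw [if_neg (by omega)]
          have hdthigh : ∀ k, m' < k → dt k = k := by
            intro k hk
            rw [Fin.lt_def, hm't] at hk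
            rw [hdt]; simp only; rw [if_neg (by omega)]
          rw [mem_fsetF, mem_fsetF]
          rcases lt_trichotomy i b with hib | hib | hib
          · -- i < b
            constructor
            · rintro ⟨j, hj1, hj2⟩
              have hjm : j < m' := by
                rcases lt_trichotomy j m' with h1 | h1 | h1
                · exact h1
                · exfalso; rw [h1, hem] at hj1; exact absurd hj1 (ne_of_lt hib).symm
                · exfalso; rw [hehigh j h1] at hj1
                  exact absurd hj1 (ne_of_gt (lt_trans (lt_trans hib hlt) h1))
              refine Or.inl ⟨hib, j, by rw [← helow j hjm]; exact hj1, fun k hk => ?_⟩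
              rcases lt_trichotomy k m' with h1 | h1 | h1
              · rw [← helow k h1]; exact hj2 k hk
              · rw [h1, hdtm]; exact lt_trans hib hlt
              · rw [hdthigh k h1]; exact lt_trans (lt_trans hib hlt) h1
            · rintro (⟨_, j, hj1, hj2⟩ | rfl | hc)
              · have hjm : j < m' := by
                  rcases lt_trichotomy j m' with h1 | h1 | h1
                  · exact h1
                  · exfalso; rw [h1, hdtm] at hj1
                    exact absurd hj1 (ne_of_gt (lt_trans hib hlt))
                  · exfalso; rw [hdthigh j h1] at hj1
                    exact absurd hj1 (ne_of_gt (lt_trans (lt_trans hib hlt) h1))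
                refine ⟨j, by rw [helow j hjm]; exact hj1, fun k hk => ?_⟩
                rcases lt_trichotomy k m' with h1 | h1 | h1
                · rw [helow k h1]; exact hj2 k hk
                · rw [h1, hem]; exact hib
                · rw [hehigh k h1]; exact lt_trans (lt_trans hib hlt) h1
              · exact absurd hib (lt_irrefl _)
              · exact absurd (lt_trans hc hib) (not_lt.2 (le_of_lt hlt))
          · -- i = b : witness m'
            subst hib
            constructor
            · intro _; exact Or.inr (Or.inl rfl)
            · intro _
              refine ⟨m', hem, fun k hk => ?_⟩
              rw [hehigh k hk]
              exact lt_trans hlt hk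
          · rcases lt_or_ge m' i with him | him
            · -- m' < i : witness i
              constructor
              · intro _; exact Or.inr (Or.inr him)
              · intro _
                refine ⟨i, hehigh i him, fun k hk => ?_⟩
                rw [hehigh k (lt_trans him hk)]
                exact hk
            · -- b < i ≤ m' : no witness
              have hnot : ¬ ∃ j, e j = i ∧ ∀ k, j < k → i < e k := by
                rintro ⟨j, hj1, hj2⟩
                rcases lt_trichotomy j m' with h1 | h1 | h1
                · have := hj2 m' h1
                  rw [hem] at this
                  exact absurd this (not_lt.2 (le_of_lt hib))
                · rw [h1, hem] at hj1
                  exact absurd hj1 (ne_of_lt hib)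
                · rw [hehigh j h1] at hj1
                  rw [hj1] at h1
                  exact absurd h1 (not_lt.2 him)
              constructor
              · intro hc; exact absurd hc hnot
              · rintro (⟨hc, _⟩ | rfl | hc)
                · exact absurd hib (not_lt.2 (le_of_lt hc))
                · exact absurd hib (lt_irrefl _)
                · exact absurd hc (not_lt.2 him)
        ext i
        rw [claim1 i, claim2 i, ih]

theorem lmap_thm (σ : Equiv.Perm (Fin n)) : LmapSet σ = LmapSet (phi σ) := by
  rw [lmap_eq_fset_acode, phi_eq_psi, psi_lmap (acodeF σ) (acodeF_le σ) n]
  have h1 : (fun i : Fin n => if (i : ℕ) < n then acodeF σ i else i) = acodeF σ :=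
    funext fun i => if_pos i.isLt
  rw [h1, ← fset_nat]
  congr 1
  funext k
  rw [acodeF_nat]

/-! ### rank lemma for sorted finsets -/

theorem sort_getD_rank (S : Finset (Fin n)) (x : Fin n) (hx : x ∈ S) (dflt : Fin n) :
    (S.sort (· ≤ ·)).getD ((S.filter (fun y => y ≤ x)).card - 1) dflt = x := by
  classical
  set iso := S.orderIsoOfFin rfl with hiso
  set j : Fin S.card := iso.symm ⟨x, hx⟩ with hj
  have hisoj : (iso j : Fin n) = x := by rw [hj]; simp
  have hcard : (S.filter (fun y => y ≤ x)).card = (j : ℕ) + 1 := by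
    have himg : S.filter (fun y => y ≤ x)
        = (Finset.Iic j).image (fun i => (iso i : Fin n)) := by
      apply Finset.Subset.antisymm
      · intro y hy
        rw [Finset.mem_filter] at hy
        obtain ⟨hyS, hyx⟩ := hy
        refine Finset.mem_image.2 ⟨iso.symm ⟨y, hyS⟩, ?_, by simp⟩
        rw [Finset.mem_Iic, hj]
        exact iso.symm.monotone (Subtype.mk_le_mk.2 hyx)
      · intro y hy
        obtain ⟨i, hi, rfl⟩ := Finset.mem_image.1 hy
        rw [Finset.mem_Iic] at hi
        rw [Finset.mem_filter]
        refine ⟨(iso i).2, ?_⟩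
        have h2 : ((iso i : Fin n)) ≤ ((iso j : Fin n)) := iso.monotone hi
        rw [hisoj] at h2
        exact h2
    rw [himg, Finset.card_image_of_injective _ (fun a b hab => iso.injective
      (Subtype.coe_injective hab)), Fin.card_Iic]
  rw [hcard]
  simp only [Nat.add_sub_cancel]
  have hlen : (j : ℕ) < (S.sort (· ≤ ·)).length := by
    rw [Finset.length_sort]
    exact j.isLt
  rw [List.getD_eq_getElem _ _ hlen]
  have := Finset.orderEmbOfFin_apply S rfl j
  rw [← Finset.coe_orderIsoOfFin_apply, ← hiso, hisoj] at this
  exact this.symm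

/-! ### the induced set of the A-code is the inversion set -/

theorem inducedAux_invariant (σ : Equiv.Perm (Fin n)) :
    ∀ L : List (Fin n), (∀ k (hk : k < L.length), (L.get ⟨k, hk⟩ : ℕ) = L.length - 1 - k) →
    inducedAux L (Finset.univ.filter (fun p => (σ p : ℕ) < L.length)) (Acode σ)
      = Finset.univ.filter (fun q : Fin n × Fin n =>
          q.1 < q.2 ∧ σ q.2 < σ q.1 ∧ (σ q.1 : ℕ) < L.length) := by
  intro L
  induction L with
  | nil =>
      intro _
      rw [inducedAux]
      symm
      apply Finset.filter_false_of_mem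
      intro q _
      simp
  | cons i is ih =>
      intro hprop
      set t := is.length with ht
      have hlen : (i :: is).length = t + 1 := by simp [ht]
      have hi : (i : ℕ) = t := by
        have := hprop 0 (by simp)
        simpa [hlen] using this
      have his : ∀ k (hk : k < is.length), (is.get ⟨k, hk⟩ : ℕ) = is.length - 1 - k := by
        intro k hk
        have := hprop (k + 1) (by simp [hlen]; omega)
        simp only [List.get_cons_succ] at this
        rw [this, hlen]
        omega
      rw [inducedAux]
      set S := Finset.univ.filter (fun p => (σ p : ℕ) < (i :: is).length) with hS
      have hmem : σ⁻¹ i ∈ S := by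
        rw [hS, Finset.mem_filter]
        refine ⟨Finset.mem_univ _, ?_⟩
        rw [Equiv.Perm.apply_inv_self, hlen, hi]
        omega
      have hcardA : (S.filter (fun y => y ≤ σ⁻¹ i)).card = Acode σ i := by
        have himg : S.filter (fun y => y ≤ σ⁻¹ i)
            = (Finset.univ.filter (fun j => j ≤ i ∧ σ⁻¹ j ≤ σ⁻¹ i)).image
              (fun j => σ⁻¹ j) := by
          apply Finset.Subset.antisymm
          · intro p hp
            rw [Finset.mem_filter, hS, Finset.mem_filter] at hp
            obtain ⟨⟨_, hp1⟩, hp2⟩ := hp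
            refine Finset.mem_image.2 ⟨σ p, ?_, by simp⟩
            rw [Finset.mem_filter]
            refine ⟨Finset.mem_univ _, ?_, by simpa using hp2⟩
            rw [Fin.le_def, hi]
            rw [hlen] at hp1
            omega
          · intro p hp
            obtain ⟨j, hj, rfl⟩ := Finset.mem_image.1 hp
            rw [Finset.mem_filter] at hj
            obtain ⟨_, hj1, hj2⟩ := hj
            rw [Finset.mem_filter, hS, Finset.mem_filter]
            refine ⟨⟨Finset.mem_univ _, ?_⟩, hj2⟩
            rw [Equiv.Perm.apply_inv_self, hlen]
            rw [Fin.le_def, hi] at hj1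
            omega
        rw [himg, Finset.card_image_of_injective _ σ⁻¹.injective, acode_def]
      have hl' : ((S.sort (· ≤ ·)).getD (Acode σ i - 1) i) = σ⁻¹ i := by
        rw [← hcardA]
        exact sort_getD_rank S (σ⁻¹ i) hmem i
      rw [hl']
      have herase : S.erase (σ⁻¹ i) = Finset.univ.filter (fun p => (σ p : ℕ) < is.length) := by
        ext p
        rw [Finset.mem_erase, hS, Finset.mem_filter, Finset.mem_filter, hlen]
        simp only [Finset.mem_univ, true_and]
        constructor
        · rintro ⟨h1, h2⟩
          have : σ p ≠ i := fun hc => h1 (by rw [← hc, Equiv.Perm.inv_apply_self])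
          rw [Fin.ne_iff_vne, hi] at this
          omega
        · intro h1
          constructor
          · intro hc
            rw [hc, Equiv.Perm.apply_inv_self] at h1
            omega
          · omega
      rw [herase, ih his]
      have himg2 : (S.filter (fun j => σ⁻¹ i < j)).image (fun j => (σ⁻¹ i, j))
          = Finset.univ.filter (fun q : Fin n × Fin n =>
              q.1 < q.2 ∧ σ q.2 < σ q.1 ∧ σ q.1 = i) := by
        ext q
        rw [Finset.mem_image, Finset.mem_filter]
        simp only [Finset.mem_univ, true_and]
        constructor
        · rintro ⟨j, hj, rfl⟩
          rw [Finset.mem_filter, hS, Finset.mem_filter, hlen] at hj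
          obtain ⟨⟨_, hj1⟩, hj2⟩ := hj
          have hji : j ≠ σ⁻¹ i := ne_of_gt hj2
          have hσj : σ j ≠ i := fun hc => hji (by rw [← hc, Equiv.Perm.inv_apply_self])
          rw [Fin.ne_iff_vne, hi] at hσj
          refine ⟨hj2, ?_, by simp⟩
          simp only [Equiv.Perm.apply_inv_self]
          rw [Fin.lt_def, hi]
          omega
        · rintro ⟨h1, h2, h3⟩
          have hq1 : q.1 = σ⁻¹ i := by rw [← h3, Equiv.Perm.inv_apply_self]
          refine ⟨q.2, ?_, ?_⟩
          · rw [Finset.mem_filter, hS, Finset.mem_filter, hlen]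
            rw [h3] at h2
            rw [Fin.lt_def, hi] at h2
            refine ⟨⟨Finset.mem_univ _, by omega⟩, ?_⟩
            rw [← hq1]; exact h1
          · rw [← hq1]
      rw [himg2]
      ext q
      rw [Finset.mem_union, Finset.mem_filter, Finset.mem_filter, Finset.mem_filter, hlen]
      simp only [Finset.mem_univ, true_and]
      constructor
      · rintro (⟨h1, h2, h3⟩ | ⟨h1, h2, h3⟩)
        · refine ⟨h1, h2, ?_⟩; rw [h3, hi]; omega
        · exact ⟨h1, h2, by omega⟩
      · rintro ⟨h1, h2, h3⟩
        rcases Nat.lt_or_ge ((σ q.1 : ℕ)) t with hc | hc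
        · exact Or.inr ⟨h1, h2, hc⟩
        · refine Or.inl ⟨h1, h2, ?_⟩
          apply Fin.ext
          rw [hi]
          omega

theorem induced_acode (σ : Equiv.Perm (Fin n)) : induced (Acode σ) = InvSet σ := by
  rw [induced]
  have hrev : (List.finRange n).reverse.length = n := by simp
  have hprop : ∀ k (hk : k < (List.finRange n).reverse.length),
      ((List.finRange n).reverse.get ⟨k, hk⟩ : ℕ)
        = (List.finRange n).reverse.length - 1 - k := by
    intro k hk
    rw [List.get_eq_getElem]
    have hk' : k < (List.finRange n).reverse.length := hk
    rw [hrev] at hk'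
    rw [List.getElem_reverse]
    simp [List.getElem_finRange]
  have key := inducedAux_invariant σ (List.finRange n).reverse hprop
  rw [hrev] at key
  have huniv : Finset.univ.filter (fun p : Fin n => (σ p : ℕ) < n) = Finset.univ :=
    Finset.filter_true_of_mem (fun p _ => (σ p).isLt)
  rw [huniv] at key
  rw [key, InvSet]
  ext q
  rw [Finset.mem_filter, Finset.mem_filter]
  simp only [Finset.mem_univ, true_and]
  exact ⟨fun ⟨h1, h2, _⟩ => ⟨h1, h2⟩, fun ⟨h1, h2⟩ => ⟨h1, h2, (σ q.1).isLt⟩⟩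

theorem inv_thm (σ : Equiv.Perm (Fin n)) : InvSet σ = SorSet (phi σ) := by
  rw [SorSet, bcodeNat_phi, induced_acode]
end

end SortIdx

/-- Theorem 1.3(1).
`(Inv, Rmil, Lmap, Lmil) σ = (Sor, Cyc, Lmap, Lmic₁) (φ σ)`. -/
theorem inv_rmil_lmap_lmil_eq_phi (n : ℕ) (σ : Equiv.Perm (Fin n)) :
    SortIdx.InvSet σ = SortIdx.SorSet (SortIdx.phi σ) ∧
    SortIdx.RmilSet σ = SortIdx.CycSet (SortIdx.phi σ) ∧
    SortIdx.LmapSet σ = SortIdx.LmapSet (SortIdx.phi σ) ∧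
    SortIdx.LmilSet σ = SortIdx.Lmic1Set (SortIdx.phi σ) :=
  ⟨SortIdx.inv_thm σ, SortIdx.rmil_thm σ, SortIdx.lmap_thm σ, SortIdx.lmil_thm σ⟩
end

section
/- For every n ≥ 1, the following polynomial identity holds in ℤ[q,x,y]: Σ_{σ∈S_n} q^{inv(σ)} x^{rmin(σ)} y^{lmin(σ)} = Σ_{σ∈S_n} q^{sor(σ)} x^{cyc(σ)} y^{lmic1(σ)} = xy · ∏_{r=2}^{n} (x + [r]_q + y·q^{r−1} − 1 − q^{r−1}). -/
open scoped Classical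

namespace SortIdxAux

open SortIdx Equiv Finset

noncomputable section

variable {n : ℕ}

/-- Insert the largest letter at place `p`: `ins p σ` sends `p ↦ last` and
`p.succAbove j ↦ (σ j).castSucc`. -/
def ins (p : Fin (n + 1)) (σ : Perm (Fin n)) : Perm (Fin (n + 1)) :=
  (finSuccEquiv' p).trans ((Equiv.optionCongr σ).trans (finSuccEquiv' (Fin.last n)).symm)

@[simp] lemma ins_at (p : Fin (n + 1)) (σ : Perm (Fin n)) : ins p σ p = Fin.last n := by
  simp [ins]

@[simp] lemma ins_succAbove (p : Fin (n + 1)) (σ : Perm (Fin n)) (j : Fin n) :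
    ins p σ (p.succAbove j) = (σ j).castSucc := by
  simp [ins, ← Fin.succAbove_last]

/-- Extend a permutation of `Fin n` to `Fin (n+1)` fixing the last element. -/
def ext (σ : Perm (Fin n)) : Perm (Fin (n + 1)) := ins (Fin.last n) σ

@[simp] lemma ext_castSucc (σ : Perm (Fin n)) (j : Fin n) :
    ext σ j.castSucc = (σ j).castSucc := by
  have h := ins_succAbove (Fin.last n) σ j
  rwa [Fin.succAbove_last] at h

@[simp] lemma ext_last (σ : Perm (Fin n)) : ext σ (Fin.last n) = Fin.last n := ins_at _ _

lemma ext_mul (σ τ : Perm (Fin n)) : ext (σ * τ) = ext σ * ext τ := by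
  ext x
  refine Fin.lastCases ?_ (fun j => ?_) x <;> simp [Equiv.Perm.mul_apply]

@[simp] lemma ext_one : ext (1 : Perm (Fin n)) = 1 := by
  ext x
  refine Fin.lastCases ?_ (fun j => ?_) x <;> simp

lemma ext_inv (σ : Perm (Fin n)) : (ext σ)⁻¹ = ext σ⁻¹ :=
  inv_eq_of_mul_eq_one_right (by rw [← ext_mul]; simp)

lemma ext_pow (σ : Perm (Fin n)) (k : ℕ) : (ext σ) ^ k = ext (σ ^ k) := by
  induction k with
  | zero => simp
  | succ k ih => rw [pow_succ, pow_succ, ih, ext_mul]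

lemma ext_swap (a b : Fin n) :
    ext (Equiv.swap a b) = Equiv.swap a.castSucc b.castSucc := by
  ext x
  refine Fin.lastCases ?_ (fun j => ?_) x
  · rw [ext_last, Equiv.swap_apply_of_ne_of_ne (Fin.castSucc_lt_last a).ne'
      (Fin.castSucc_lt_last b).ne']
  · rw [ext_castSucc, (Fin.castSucc_injective n).swap_apply]

lemma support_ext (σ : Perm (Fin n)) :
    (ext σ).support = σ.support.image Fin.castSucc := by
  ext x
  refine Fin.lastCases ?_ (fun j => ?_) x
  · simp only [Equiv.Perm.mem_support, ext_last, ne_eq, not_true_eq_false, false_iff,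
      Finset.mem_image, not_exists, not_and]
    exact fun j _ => (Fin.castSucc_lt_last j).ne
  · simp only [Equiv.Perm.mem_support, ext_castSucc, ne_eq, Finset.mem_image]
    constructor
    · intro h
      exact ⟨j, fun hj => h (by rw [hj]), rfl⟩
    · rintro ⟨k, hk, hkj⟩ h
      cases Fin.castSucc_injective n hkj
      exact hk (Fin.castSucc_injective n h)

lemma sorAux_one (m fuel : ℕ) : sorAux fuel (1 : Perm (Fin m)) = 0 := by
  cases fuel with
  | zero => rfl
  | succ fuel => simp [sorAux]

lemma sorAux_ext (fuel : ℕ) : ∀ σ : Perm (Fin n), sorAux fuel (ext σ) = sorAux fuel σ := by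
  induction fuel with
  | zero => intro σ; rfl
  | succ fuel ih =>
    intro σ
    by_cases h : σ.support.Nonempty
    · have h' : (ext σ).support.Nonempty := by
        rw [support_ext]; exact h.image _
      have hmax : (ext σ).support.max' h' = (σ.support.max' h).castSucc := by
        refine le_antisymm (Finset.max'_le _ _ _ ?_) (Finset.le_max' _ _ ?_)
        · intro x hx
          rw [support_ext] at hx
          obtain ⟨y, hy, rfl⟩ := Finset.mem_image.1 hx
          exact Fin.castSucc_le_castSucc_iff.2 (Finset.le_max' _ _ hy)
        · rw [support_ext]
          exact Finset.mem_image_of_mem _ (Finset.max'_mem _ _)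
      have hinv : (ext σ)⁻¹ ((ext σ).support.max' h') = (σ⁻¹ (σ.support.max' h)).castSucc := by
        rw [hmax, ext_inv, ext_castSucc]
      simp only [sorAux, dif_pos h, dif_pos h']
      rw [hinv, hmax, Fin.coe_castSucc, Fin.coe_castSucc, ← ext_swap, ← ext_mul, ih]
    · have h' : ¬ (ext σ).support.Nonempty := by
        rw [support_ext, Finset.image_nonempty]; exact h
      simp only [sorAux, dif_neg h, dif_neg h']

end

end SortIdxAux
namespace SortIdxAux

open SortIdx Equiv Finset

noncomputable section

variable {n : ℕ}

lemma step_support {m : ℕ} (σ : Perm (Fin m)) (h : σ.support.Nonempty) (x : Fin m)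
    (hx : x ∈ (σ * Equiv.swap (σ⁻¹ (σ.support.max' h)) (σ.support.max' h)).support) :
    x ∈ σ.support ∧ x < σ.support.max' h := by
  set M := σ.support.max' h with hM
  set a := σ⁻¹ M with ha
  have hσa : σ a = M := σ.apply_symm_apply M
  have hxM : x ≠ M := by
    rintro rfl
    rw [Equiv.Perm.mem_support] at hx
    exact hx (by rw [Equiv.Perm.mul_apply, Equiv.swap_apply_right, hσa])
  have hxs : x ∈ σ.support := by
    by_contra hxs
    rw [Equiv.Perm.notMem_support] at hxs
    have hxa : x ≠ a := by
      rintro rfl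
      exact hxM (by rw [← hσa, hxs])
    rw [Equiv.Perm.mem_support, Equiv.Perm.mul_apply,
      Equiv.swap_apply_of_ne_of_ne hxa hxM, hxs] at hx
    exact hx rfl
  exact ⟨hxs, lt_of_le_of_ne (Finset.le_max' _ _ hxs) hxM⟩

lemma sorAux_fuel {m : ℕ} :
    ∀ fuel (σ : Perm (Fin m)), (∀ x ∈ σ.support, (x : ℕ) < fuel) →
      ∀ fuel', fuel ≤ fuel' → sorAux fuel σ = sorAux fuel' σ := by
  intro fuel
  induction fuel with
  | zero =>
    intro σ hσ fuel' _
    have hone : σ = 1 := by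
      rw [← Equiv.Perm.support_eq_empty_iff]
      exact Finset.eq_empty_of_forall_notMem fun x hx => absurd (hσ x hx) (Nat.not_lt_zero _)
    rw [hone, sorAux_one, sorAux_one]
  | succ fuel ih =>
    intro σ hσ fuel' hle
    obtain ⟨fuel2, rfl⟩ : ∃ f2, fuel' = f2 + 1 := ⟨fuel' - 1, by omega⟩
    by_cases h : σ.support.Nonempty
    · simp only [sorAux, dif_pos h]
      congr 1
      apply ih
      · intro x hx
        obtain ⟨hxs, hxM⟩ := step_support σ h x hx
        have h1 : (x : ℕ) < ((σ.support.max' h : Fin m) : ℕ) := hxM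
        have h2 : ((σ.support.max' h : Fin m) : ℕ) < fuel + 1 := hσ _ (Finset.max'_mem _ _)
        omega
      · omega
    · simp only [sorAux, dif_neg h]

/-- The permutation corresponding to the pair `(i, σ)` in the sorting-side
decomposition. -/
def tau (i : Fin (n + 1)) (σ : Perm (Fin n)) : Perm (Fin (n + 1)) :=
  ext σ * Equiv.swap i (Fin.last n)

lemma tau_apply_castSucc (i : Fin (n + 1)) (σ : Perm (Fin n)) (j : Fin n)
    (hj : j.castSucc ≠ i) : tau i σ j.castSucc = (σ j).castSucc := by
  rw [tau, Equiv.Perm.mul_apply,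
    Equiv.swap_apply_of_ne_of_ne hj (Fin.castSucc_lt_last j).ne, ext_castSucc]

lemma tau_apply_self (i : Fin (n + 1)) (σ : Perm (Fin n)) : tau i σ i = Fin.last n := by
  rw [tau, Equiv.Perm.mul_apply, Equiv.swap_apply_left, ext_last]

lemma tau_apply_last (i : Fin (n + 1)) (σ : Perm (Fin n)) :
    tau i σ (Fin.last n) = ext σ i := by
  rw [tau, Equiv.Perm.mul_apply, Equiv.swap_apply_right]

lemma tau_inv_last (i : Fin (n + 1)) (σ : Perm (Fin n)) :
    (tau i σ)⁻¹ (Fin.last n) = i := by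
  rw [← tau_apply_self i σ, ← Equiv.Perm.mul_apply, inv_mul_cancel, Equiv.Perm.one_apply]

lemma tau_inv_castSucc (i : Fin (n + 1)) (σ : Perm (Fin n)) (j : Fin n) :
    (tau i σ)⁻¹ j.castSucc = Equiv.swap i (Fin.last n) ((σ⁻¹ j).castSucc) := by
  rw [tau, mul_inv_rev, Equiv.Perm.mul_apply, ext_inv, ext_castSucc, Equiv.swap_inv]

lemma sor_tau (i : Fin (n + 1)) (σ : Perm (Fin n)) :
    sor (tau i σ) = (n - (i : ℕ)) + sor σ := by
  by_cases hi : i = Fin.last n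
  · subst hi
    have htau : tau (Fin.last n) σ = ext σ := by
      rw [tau, Equiv.swap_self, ← Equiv.Perm.one_def, mul_one]
    rw [htau, sor, sorAux_ext, ← sorAux_fuel n σ (fun x _ => x.isLt) (n + 1) (Nat.le_succ n),
      Fin.val_last, Nat.sub_self, Nat.zero_add, sor]
  · obtain ⟨i₀, rfl⟩ := Fin.exists_castSucc_eq.mpr hi
    have hlast : Fin.last n ∈ (tau i₀.castSucc σ).support := by
      rw [Equiv.Perm.mem_support, tau_apply_last, ext_castSucc]
      exact (Fin.castSucc_lt_last _).ne
    have hne : (tau i₀.castSucc σ).support.Nonempty := ⟨_, hlast⟩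
    have hmax : (tau i₀.castSucc σ).support.max' hne = Fin.last n :=
      le_antisymm (Finset.max'_le _ _ _ fun x _ => Fin.le_last x) (Finset.le_max' _ _ hlast)
    rw [sor]
    simp only [sorAux, dif_pos hne]
    rw [hmax, tau_inv_last, Fin.val_last]
    congr 1
    have hms : tau i₀.castSucc σ * Equiv.swap i₀.castSucc (Fin.last n) = ext σ := by
      rw [tau, mul_assoc, Equiv.swap_mul_self, mul_one]
    rw [hms, sorAux_ext, sor]

end

end SortIdxAux
namespace SortIdxAux

open SortIdx Equiv Finset

noncomputable section

variable {n : ℕ}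

/-- Abstract one-step simulation property: applying `ρ` to `x.castSucc` reaches
`(π x).castSucc` in one or two steps, passing only through `last`. -/
def StepProp (ρ : Perm (Fin (n + 1))) (π : Perm (Fin n)) : Prop :=
  ∀ x : Fin n, ∃ c : ℕ, (c = 1 ∨ c = 2) ∧ (ρ ^ c) x.castSucc = (π x).castSucc ∧
    ∀ l, 0 < l → l < c → (ρ ^ l) x.castSucc = Fin.last n

lemma step_fwd (i : Fin (n + 1)) (σ : Perm (Fin n)) : StepProp (tau i σ) σ := by
  intro x
  by_cases h : x.castSucc = i
  · refine ⟨2, Or.inr rfl, ?_, ?_⟩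
    · have h1 : tau i σ x.castSucc = Fin.last n := by rw [h, tau_apply_self]
      have h2 : tau i σ (Fin.last n) = (σ x).castSucc := by
        rw [tau_apply_last, ← h, ext_castSucc]
      rw [pow_two, Equiv.Perm.mul_apply, h1, h2]
    · intro l h0 hl
      interval_cases l
      rw [pow_one, h, tau_apply_self]
  · refine ⟨1, Or.inl rfl, ?_, fun l h0 hl => absurd h0 (by omega)⟩
    rw [pow_one, tau_apply_castSucc _ _ _ h]

lemma step_inv (i : Fin (n + 1)) (σ : Perm (Fin n)) : StepProp (tau i σ)⁻¹ σ⁻¹ := by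
  intro x
  by_cases h : (σ⁻¹ x).castSucc = i
  · refine ⟨2, Or.inr rfl, ?_, ?_⟩
    · have h1 : (tau i σ)⁻¹ x.castSucc = Fin.last n := by
        rw [tau_inv_castSucc, h, Equiv.swap_apply_left]
      have h2 : (tau i σ)⁻¹ (Fin.last n) = (σ⁻¹ x).castSucc := by
        rw [tau_inv_last]; exact h.symm
      rw [pow_two, Equiv.Perm.mul_apply, h1, h2]
    · intro l h0 hl
      interval_cases l
      rw [pow_one, tau_inv_castSucc, h, Equiv.swap_apply_left]
  · refine ⟨1, Or.inl rfl, ?_, fun l h0 hl => absurd h0 (by omega)⟩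
    rw [pow_one, tau_inv_castSucc,
      Equiv.swap_apply_of_ne_of_ne h (Fin.castSucc_lt_last _).ne]

lemma accum {ρ : Perm (Fin (n + 1))} {π : Perm (Fin n)} (hs : StepProp ρ π) (j : Fin n) :
    ∀ m : ℕ, ∃ k : ℕ, m ≤ k ∧ (m = 0 → k = 0) ∧
      (ρ ^ k) j.castSucc = ((π ^ m) j).castSucc ∧
      ∀ l, 0 < l → l < k → (ρ ^ l) j.castSucc = Fin.last n ∨
        ∃ m', 0 < m' ∧ m' < m ∧ (ρ ^ l) j.castSucc = ((π ^ m') j).castSucc := by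
  intro m
  induction m with
  | zero => exact ⟨0, le_refl 0, fun _ => rfl, by simp, fun l h0 hl => absurd h0 (by omega)⟩
  | succ m ihm =>
    obtain ⟨k, hmk, hk0, hval, hmid⟩ := ihm
    obtain ⟨c, hc12, hcval, hcmid⟩ := hs ((π ^ m) j)
    have hc1 : 1 ≤ c := by rcases hc12 with rfl | rfl <;> omega
    refine ⟨k + c, by omega, by omega, ?_, ?_⟩
    · rw [add_comm k c, pow_add, Equiv.Perm.mul_apply, hval, hcval, pow_succ',
        Equiv.Perm.mul_apply]
    · intro l h0 hl
      rcases lt_trichotomy l k with h | h | h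
      · rcases hmid l h0 h with hlast | ⟨m', hm0, hmm, hv⟩
        · exact Or.inl hlast
        · exact Or.inr ⟨m', hm0, by omega, hv⟩
      · subst h
        rcases Nat.eq_zero_or_pos m with rfl | hm
        · exact absurd (hk0 rfl) (by omega)
        · exact Or.inr ⟨m, hm, by omega, hval⟩
      · obtain ⟨d, rfl⟩ : ∃ d, l = k + d := ⟨l - k, by omega⟩
        have hd0 : 0 < d := by omega
        have hdc : d < c := by omega
        left
        rw [add_comm k d, pow_add, Equiv.Perm.mul_apply, hval]
        exact hcmid d hd0 hdc

lemma cycSet_tau (i : Fin (n + 1)) (σ : Perm (Fin n)) :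
    CycSet (tau i σ) =
      (CycSet σ).image Fin.castSucc ∪
        (if i = Fin.last n then {Fin.last n} else ∅) := by
  ext x
  simp only [CycSet, Finset.mem_filter, Finset.mem_univ, true_and, Finset.mem_union,
    Finset.mem_image]
  refine Fin.lastCases ?_ (fun j => ?_) x
  · constructor
    · intro h
      by_cases hi : i = Fin.last n
      · right; simp [hi]
      · exfalso
        obtain ⟨i₀, rfl⟩ := Fin.exists_castSucc_eq.mpr hi
        have h1 := h 1
        rw [pow_one, tau_apply_last, ext_castSucc] at h1
        exact absurd h1 (not_le.2 (Fin.castSucc_lt_last _))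
    · rintro (⟨y, _, hy⟩ | h)
      · exact absurd hy (Fin.castSucc_lt_last y).ne
      · have hi : i = Fin.last n := by
          by_contra hi; simp [hi] at h
        subst hi
        intro k
        have htp : (tau (Fin.last n) σ) ^ k = ext (σ ^ k) := by
          rw [tau, Equiv.swap_self, ← Equiv.Perm.one_def, mul_one, ext_pow]
        rw [htp, ext_last]
  · constructor
    · intro h
      refine Or.inl ⟨j, ?_, rfl⟩
      intro m
      obtain ⟨k, _, _, hval, _⟩ := accum (step_fwd i σ) j m
      have hk := h k
      rw [hval] at hk
      exact Fin.castSucc_le_castSucc_iff.1 hk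
    · rintro (⟨y, hy, hyx⟩ | h)
      · obtain rfl : y = j := Fin.castSucc_injective n hyx
        intro k
        rcases Nat.eq_zero_or_pos k with rfl | hk0
        · simp
        obtain ⟨k', hk'le, _, hval, hmid⟩ := accum (step_fwd i σ) y k
        rcases eq_or_lt_of_le hk'le with rfl | hklt
        · rw [hval]
          exact Fin.castSucc_le_castSucc_iff.2 (hy k)
        · rcases hmid k hk0 hklt with hlast | ⟨m', _, _, hv⟩
          · rw [hlast]; exact Fin.le_last _
          · rw [hv]; exact Fin.castSucc_le_castSucc_iff.2 (hy m')
      · exfalso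
        by_cases hi : i = Fin.last n
        · rw [if_pos hi, Finset.mem_singleton] at h
          exact (Fin.castSucc_lt_last j).ne h
        · rw [if_neg hi] at h
          exact absurd h (Finset.notMem_empty _)

lemma cyc_tau (i : Fin (n + 1)) (σ : Perm (Fin n)) :
    cyc (tau i σ) = cyc σ + (if i = Fin.last n then 1 else 0) := by
  rw [cyc, cycSet_tau, Finset.card_union_of_disjoint, Finset.card_image_of_injective _
    (Fin.castSucc_injective n), cyc]
  · congr 1
    split <;> simp
  · rw [Finset.disjoint_left]
    intro x hx1 hx
    obtain ⟨y, -, rfl⟩ := Finset.mem_image.1 hx1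
    by_cases hi : i = Fin.last n
    · rw [if_pos hi, Finset.mem_singleton] at hx
      exact (Fin.castSucc_lt_last y).ne hx
    · rw [if_neg hi] at hx
      exact absurd hx (Finset.notMem_empty _)

end

end SortIdxAux
namespace SortIdxAux

open SortIdx Equiv Finset

noncomputable section

variable {n : ℕ}

lemma bcode_eq {m : ℕ} (σ : Perm (Fin m)) {i : Fin m} {k : ℕ} (hk : 0 < k)
    (hval : (σ⁻¹ ^ k) i ≤ i) (hmin : ∀ l, 0 < l → l < k → ¬(σ⁻¹ ^ l) i ≤ i) :
    Bcode σ i = (σ⁻¹ ^ k) i := by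
  have hfind : Nat.find (bcode_exists σ i) = k := by
    rw [Nat.find_eq_iff]
    refine ⟨⟨hk, hval⟩, fun l hl => ?_⟩
    rintro ⟨h0, hv⟩
    exact hmin l h0 hl hv
  rw [Bcode, hfind]

lemma bcode_tau_last (i : Fin (n + 1)) (σ : Perm (Fin n)) :
    Bcode (tau i σ) (Fin.last n) = i := by
  rw [bcode_eq (tau i σ) Nat.one_pos (Fin.le_last _)
    (fun l h0 hl => absurd h0 (by omega)), pow_one, tau_inv_last]

lemma bcode_tau_castSucc (i : Fin (n + 1)) (σ : Perm (Fin n)) (j : Fin n) :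
    Bcode (tau i σ) j.castSucc = (Bcode σ j).castSucc := by
  set K := Nat.find (bcode_exists σ j) with hK
  have hK0 : 0 < K := (Nat.find_spec (bcode_exists σ j)).1
  have hKval : (σ⁻¹ ^ K) j ≤ j := (Nat.find_spec (bcode_exists σ j)).2
  have hKmin : ∀ l, 0 < l → l < K → ¬(σ⁻¹ ^ l) j ≤ j := fun l h0 hl hv =>
    Nat.find_min (bcode_exists σ j) hl ⟨h0, hv⟩
  obtain ⟨k, hKk, -, hval, hmid⟩ := accum (step_inv i σ) j K
  have h1 : ((tau i σ)⁻¹ ^ k) j.castSucc ≤ j.castSucc := by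
    rw [hval]; exact Fin.castSucc_le_castSucc_iff.2 hKval
  have h2 : ∀ l, 0 < l → l < k → ¬((tau i σ)⁻¹ ^ l) j.castSucc ≤ j.castSucc := by
    intro l h0 hl
    rcases hmid l h0 hl with hlast | ⟨m', hm0, hmK, hv⟩
    · rw [hlast]; exact not_le.2 (Fin.castSucc_lt_last j)
    · rw [hv]
      exact fun hle => hKmin m' hm0 hmK (Fin.castSucc_le_castSucc_iff.1 hle)
  rw [bcode_eq (tau i σ) (by omega) h1 h2, hval, Bcode, ← hK]

lemma lmic1_tau (i : Fin (n + 1)) (σ : Perm (Fin n)) :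
    lmic1 (tau i σ) = lmic1 σ + (if i = 0 then 1 else 0) := by
  have hset : Lmic1Set (tau i σ) =
      (Lmic1Set σ).image Fin.castSucc ∪ (if i = 0 then {Fin.last n} else ∅) := by
    ext x
    simp only [Lmic1Set, Oset, Finset.mem_filter, Finset.mem_univ, true_and,
      Finset.mem_union, Finset.mem_image]
    simp only [BcodeNat]
    refine Fin.lastCases ?_ (fun j => ?_) x
    · rw [bcode_tau_last]
      constructor
      · intro h
        have hi : i = 0 := by
          have hv : (i : ℕ) = 0 := by omega
          exact Fin.ext hv
        right
        rw [if_pos hi, Finset.mem_singleton]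
      · rintro (⟨y, -, hy⟩ | h)
        · exact absurd hy (Fin.castSucc_lt_last y).ne
        · by_cases hi : i = 0
          · rw [hi]; rfl
          · rw [if_neg hi] at h
            exact absurd h (Finset.notMem_empty _)
    · rw [bcode_tau_castSucc]
      constructor
      · intro h
        refine Or.inl ⟨j, ?_, rfl⟩
        rwa [Fin.coe_castSucc] at h
      · rintro (⟨y, hy, hyx⟩ | h)
        · obtain rfl : y = j := Fin.castSucc_injective n hyx
          rwa [Fin.coe_castSucc]
        · exfalso
          by_cases hi : i = 0
          · rw [if_pos hi, Finset.mem_singleton] at h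
            exact (Fin.castSucc_lt_last j).ne h
          · rw [if_neg hi] at h
            exact absurd h (Finset.notMem_empty _)
  rw [lmic1, hset, Finset.card_union_of_disjoint, Finset.card_image_of_injective _
    (Fin.castSucc_injective n), lmic1]
  · congr 1
    split <;> simp
  · rw [Finset.disjoint_left]
    intro x hx1 hx
    obtain ⟨y, -, rfl⟩ := Finset.mem_image.1 hx1
    by_cases hi : i = 0
    · rw [if_pos hi, Finset.mem_singleton] at hx
      exact (Fin.castSucc_lt_last y).ne hx
    · rw [if_neg hi] at hx
      exact absurd hx (Finset.notMem_empty _)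

end

end SortIdxAux
namespace SortIdxAux

open SortIdx Equiv Finset

noncomputable section

variable {n : ℕ}

lemma invSet_ins (p : Fin (n + 1)) (σ : Perm (Fin n)) :
    InvSet (ins p σ) =
      (InvSet σ).image (Prod.map p.succAbove p.succAbove) ∪
        (Finset.Ioi p).image (fun b => (p, b)) := by
  ext ab
  obtain ⟨a, b⟩ := ab
  simp only [InvSet, Finset.mem_filter, Finset.mem_univ, true_and, Finset.mem_union,
    Finset.mem_image, Finset.mem_Ioi, Prod.exists, Prod.map_apply, Prod.mk.injEq]
  constructor
  · rintro ⟨hab, hσ⟩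
    rcases eq_or_ne a p with rfl | ha
    · right
      exact ⟨b, hab, rfl, rfl⟩
    · obtain ⟨a', rfl⟩ := Fin.exists_succAbove_eq ha
      rcases eq_or_ne b p with rfl | hb
      · rw [ins_at, ins_succAbove] at hσ
        exact absurd hσ (not_lt.2 (Fin.castSucc_lt_last _).le)
      · obtain ⟨b', rfl⟩ := Fin.exists_succAbove_eq hb
        left
        refine ⟨a', b', ?_, rfl, rfl⟩
        rw [ins_succAbove, ins_succAbove] at hσ
        exact ⟨Fin.succAbove_lt_succAbove_iff.1 hab, Fin.castSucc_lt_castSucc_iff.1 hσ⟩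
  · rintro (⟨a', b', hmem, ha, hb⟩ | ⟨b₀, hb₀, ha, hb⟩)
    · subst ha; subst hb
      refine ⟨Fin.succAbove_lt_succAbove_iff.2 hmem.1, ?_⟩
      rw [ins_succAbove, ins_succAbove]
      exact Fin.castSucc_lt_castSucc_iff.2 hmem.2
    · subst ha; subst hb
      refine ⟨hb₀, ?_⟩
      obtain ⟨b', rfl⟩ := Fin.exists_succAbove_eq (ne_of_gt hb₀)
      rw [ins_at, ins_succAbove]
      exact Fin.castSucc_lt_last _
  
lemma inv_ins (p : Fin (n + 1)) (σ : Perm (Fin n)) :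
    inv (ins p σ) = (n - (p : ℕ)) + inv σ := by
  have h1 : inv (ins p σ) = (InvSet (ins p σ)).card := rfl
  have h2 : inv σ = (InvSet σ).card := rfl
  rw [h1, h2, invSet_ins, Finset.card_union_of_disjoint, Finset.card_image_of_injective _
    (Fin.succAbove_right_injective.prodMap Fin.succAbove_right_injective),
    Finset.card_image_of_injective _ (fun b c h => (Prod.ext_iff.1 h).2), Fin.card_Ioi]
  · omega
  · rw [Finset.disjoint_left]
    intro x hx1 hx2
    obtain ⟨⟨a', b'⟩, -, rfl⟩ := Finset.mem_image.1 hx1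
    obtain ⟨b₀, -, hb⟩ := Finset.mem_image.1 hx2
    exact Fin.succAbove_ne p a' (congrArg Prod.fst hb).symm

lemma rmipSet_ins (p : Fin (n + 1)) (σ : Perm (Fin n)) :
    RmipSet (ins p σ) =
      (RmipSet σ).image p.succAbove ∪ (if p = Fin.last n then {p} else ∅) := by
  ext x
  simp only [RmipSet, Finset.mem_filter, Finset.mem_univ, true_and, Finset.mem_union,
    Finset.mem_image]
  constructor
  · intro h
    rcases eq_or_ne x p with rfl | hx
    · right
      have hp : x = Fin.last n := by
        by_contra hp
        have hlt : x < Fin.last n := lt_of_le_of_ne (Fin.le_last x) hp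
        have hh := h (Fin.last n) hlt
        rw [ins_at] at hh
        exact absurd hh (not_lt.2 (Fin.le_last _))
      rw [if_pos hp, Finset.mem_singleton]
    · obtain ⟨x', rfl⟩ := Fin.exists_succAbove_eq hx
      left
      refine ⟨x', fun j hj => ?_, rfl⟩
      have hh := h (p.succAbove j) (Fin.succAbove_lt_succAbove_iff.2 hj)
      rw [ins_succAbove, ins_succAbove] at hh
      exact Fin.castSucc_lt_castSucc_iff.1 hh
  · rintro (⟨x', hx', rfl⟩ | h)
    · intro j hj
      rcases eq_or_ne j p with rfl | hjp
      · rw [ins_succAbove, ins_at]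
        exact Fin.castSucc_lt_last _
      · obtain ⟨j', rfl⟩ := Fin.exists_succAbove_eq hjp
        rw [ins_succAbove, ins_succAbove]
        exact Fin.castSucc_lt_castSucc_iff.2 (hx' j' (Fin.succAbove_lt_succAbove_iff.1 hj))
    · by_cases hp : p = Fin.last n
      · rw [if_pos hp, Finset.mem_singleton] at h
        subst h
        intro j hj
        rw [hp] at hj
        exact absurd hj (not_lt.2 (Fin.le_last j))
      · rw [if_neg hp] at h
        exact absurd h (Finset.notMem_empty _)

lemma lmipSet_ins (p : Fin (n + 1)) (σ : Perm (Fin n)) :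
    LmipSet (ins p σ) =
      (LmipSet σ).image p.succAbove ∪ (if p = 0 then {p} else ∅) := by
  ext x
  simp only [LmipSet, Finset.mem_filter, Finset.mem_univ, true_and, Finset.mem_union,
    Finset.mem_image]
  constructor
  · intro h
    rcases eq_or_ne x p with rfl | hx
    · right
      have hp : x = 0 := by
        by_contra hp
        have hlt : (0 : Fin (n + 1)) < x := Fin.pos_of_ne_zero hp
        have hh := h 0 hlt
        rw [ins_at] at hh
        obtain ⟨z, hz⟩ := Fin.exists_succAbove_eq (Ne.symm hp)
        rw [← hz, ins_succAbove] at hh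
        exact absurd hh (not_lt.2 (Fin.le_last _))
      rw [if_pos hp, Finset.mem_singleton]
    · obtain ⟨x', rfl⟩ := Fin.exists_succAbove_eq hx
      left
      refine ⟨x', fun j hj => ?_, rfl⟩
      have hh := h (p.succAbove j) (Fin.succAbove_lt_succAbove_iff.2 hj)
      rw [ins_succAbove, ins_succAbove] at hh
      exact Fin.castSucc_lt_castSucc_iff.1 hh
  · rintro (⟨x', hx', rfl⟩ | h)
    · intro j hj
      rcases eq_or_ne j p with rfl | hjp
      · rw [ins_succAbove, ins_at]
        exact Fin.castSucc_lt_last _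
      · obtain ⟨j', rfl⟩ := Fin.exists_succAbove_eq hjp
        rw [ins_succAbove, ins_succAbove]
        exact Fin.castSucc_lt_castSucc_iff.2 (hx' j' (Fin.succAbove_lt_succAbove_iff.1 hj))
    · by_cases hp : p = 0
      · rw [if_pos hp, Finset.mem_singleton] at h
        subst h
        intro j hj
        rw [hp] at hj
        exact absurd hj (Fin.not_lt_zero j)
      · rw [if_neg hp] at h
        exact absurd h (Finset.notMem_empty _)

lemma rmin_eq_card {m : ℕ} (σ : Perm (Fin m)) : rmin σ = (RmipSet σ).card :=
  Finset.card_image_of_injective _ σ.injective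

lemma lmin_eq_card {m : ℕ} (σ : Perm (Fin m)) : lmin σ = (LmipSet σ).card :=
  Finset.card_image_of_injective _ σ.injective

lemma rmin_ins (p : Fin (n + 1)) (σ : Perm (Fin n)) :
    rmin (ins p σ) = rmin σ + (if p = Fin.last n then 1 else 0) := by
  rw [rmin_eq_card, rmin_eq_card, rmipSet_ins, Finset.card_union_of_disjoint,
    Finset.card_image_of_injective _ Fin.succAbove_right_injective]
  · congr 1
    split <;> simp
  · rw [Finset.disjoint_left]
    intro x hx1 hx2
    obtain ⟨y, -, rfl⟩ := Finset.mem_image.1 hx1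
    by_cases hp : p = Fin.last n
    · rw [if_pos hp, Finset.mem_singleton] at hx2
      exact Fin.succAbove_ne p y hx2
    · rw [if_neg hp] at hx2
      exact absurd hx2 (Finset.notMem_empty _)

lemma lmin_ins (p : Fin (n + 1)) (σ : Perm (Fin n)) :
    lmin (ins p σ) = lmin σ + (if p = 0 then 1 else 0) := by
  rw [lmin_eq_card, lmin_eq_card, lmipSet_ins, Finset.card_union_of_disjoint,
    Finset.card_image_of_injective _ Fin.succAbove_right_injective]
  · congr 1
    split <;> simp
  · rw [Finset.disjoint_left]
    intro x hx1 hx2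
    obtain ⟨y, -, rfl⟩ := Finset.mem_image.1 hx1
    by_cases hp : p = 0
    · rw [if_pos hp, Finset.mem_singleton] at hx2
      exact Fin.succAbove_ne p y hx2
    · rw [if_neg hp] at hx2
      exact absurd hx2 (Finset.notMem_empty _)

end

end SortIdxAux
namespace SortIdxAux

open SortIdx Equiv Finset MvPolynomial

noncomputable section

variable {n : ℕ}

lemma ins_bijective :
    Function.Bijective (fun pσ : Fin (n + 1) × Perm (Fin n) => ins pσ.1 pσ.2) := by
  rw [Fintype.bijective_iff_injective_and_card]
  constructor
  · rintro ⟨p, σ⟩ ⟨q, τ⟩ h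
    simp only at h
    have hpq : p = q := by
      by_contra hpq
      obtain ⟨j, hj⟩ := Fin.exists_succAbove_eq hpq
      have h1 : ins q τ p = Fin.last n := by rw [← h, ins_at]
      rw [← hj, ins_succAbove] at h1
      exact (Fin.castSucc_lt_last _).ne h1
    subst hpq
    have hστ : σ = τ := by
      ext j
      have h2 : ins p σ (p.succAbove j) = ins p τ (p.succAbove j) := by rw [h]
      rw [ins_succAbove, ins_succAbove] at h2
      exact congrArg Fin.val (Fin.castSucc_injective n h2)
    rw [hστ]
  · simp [Fintype.card_perm, Nat.factorial_succ]

lemma tau_bijective :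
    Function.Bijective (fun iσ : Fin (n + 1) × Perm (Fin n) => tau iσ.1 iσ.2) := by
  rw [Fintype.bijective_iff_injective_and_card]
  constructor
  · rintro ⟨i, σ⟩ ⟨i', τ⟩ h
    simp only at h
    have hii : i = i' := by
      rw [← tau_inv_last i σ, h, tau_inv_last]
    subst hii
    have hστ : σ = τ := by
      have hext : ext σ = ext τ := by
        have := congrArg (· * Equiv.swap i (Fin.last n)) h
        simpa only [tau, mul_assoc, Equiv.swap_mul_self, mul_one] using this
      ext j
      have h2 : ext σ j.castSucc = ext τ j.castSucc := by rw [hext]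
      rw [ext_castSucc, ext_castSucc] at h2
      exact congrArg Fin.val (Fin.castSucc_injective n h2)
    rw [hστ]
  · simp [Fintype.card_perm, Nat.factorial_succ]

/-- The common factor polynomial. -/
def wfac (n : ℕ) (p : Fin (n + 1)) : MvPolynomial (Fin 3) ℤ :=
  X 0 ^ (n - (p : ℕ)) * X 1 ^ (if p = Fin.last n then 1 else 0) *
    X 2 ^ (if p = 0 then 1 else 0)

lemma sum_inv_side (n : ℕ) :
    (∑ σ : Perm (Fin (n + 1)),
        (X 0 : MvPolynomial (Fin 3) ℤ) ^ inv σ * X 1 ^ rmin σ * X 2 ^ lmin σ) =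
      (∑ p : Fin (n + 1), wfac n p) *
        ∑ σ : Perm (Fin n),
          (X 0 : MvPolynomial (Fin 3) ℤ) ^ inv σ * X 1 ^ rmin σ * X 2 ^ lmin σ := by
  rw [← Fintype.sum_bijective _ ins_bijective
    (fun pσ : Fin (n + 1) × Perm (Fin n) =>
      (X 0 : MvPolynomial (Fin 3) ℤ) ^ inv (ins pσ.1 pσ.2) * X 1 ^ rmin (ins pσ.1 pσ.2) *
        X 2 ^ lmin (ins pσ.1 pσ.2)) _ (fun x => rfl)]
  rw [Finset.sum_mul_sum, Fintype.sum_prod_type]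
  refine Finset.sum_congr rfl fun p _ => Finset.sum_congr rfl fun σ _ => ?_
  rw [inv_ins, rmin_ins, lmin_ins, wfac, pow_add, pow_add, pow_add]
  ring

lemma sum_sor_side (n : ℕ) :
    (∑ σ : Perm (Fin (n + 1)),
        (X 0 : MvPolynomial (Fin 3) ℤ) ^ sor σ * X 1 ^ cyc σ * X 2 ^ lmic1 σ) =
      (∑ p : Fin (n + 1), wfac n p) *
        ∑ σ : Perm (Fin n),
          (X 0 : MvPolynomial (Fin 3) ℤ) ^ sor σ * X 1 ^ cyc σ * X 2 ^ lmic1 σ := by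
  rw [← Fintype.sum_bijective _ tau_bijective
    (fun iσ : Fin (n + 1) × Perm (Fin n) =>
      (X 0 : MvPolynomial (Fin 3) ℤ) ^ sor (tau iσ.1 iσ.2) * X 1 ^ cyc (tau iσ.1 iσ.2) *
        X 2 ^ lmic1 (tau iσ.1 iσ.2)) _ (fun x => rfl)]
  rw [Finset.sum_mul_sum, Fintype.sum_prod_type]
  refine Finset.sum_congr rfl fun p _ => Finset.sum_congr rfl fun σ _ => ?_
  rw [sor_tau, cyc_tau, lmic1_tau, wfac, pow_add, pow_add, pow_add]
  ring

lemma wfac_sum (n : ℕ) (hn : 1 ≤ n) :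
    (∑ p : Fin (n + 1), wfac n p) =
      X 1 + (∑ t ∈ Finset.range (n + 1), (X 0 : MvPolynomial (Fin 3) ℤ) ^ t) +
        X 2 * X 0 ^ n - 1 - X 0 ^ n := by
  have hlast0 : (Fin.last n : Fin (n + 1)) ≠ 0 := by
    intro h
    have := congrArg Fin.val h
    rw [Fin.val_last, Fin.val_zero] at this
    omega
  have hterm : ∀ p : Fin (n + 1), wfac n p =
      X 0 ^ (n - (p : ℕ)) + (if p = Fin.last n then X 1 - 1 else 0) +
        (if p = 0 then (X 2 - 1) * X 0 ^ n else 0) := by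
    intro p
    by_cases hpl : p = Fin.last n
    · have hp0 : ¬p = 0 := by rw [hpl]; exact hlast0
      have hv : (p : ℕ) = n := by rw [hpl, Fin.val_last]
      rw [wfac, if_pos hpl, if_neg hp0, if_pos hpl, if_neg hp0, hv, Nat.sub_self]
      ring
    · by_cases hp0 : p = 0
      · have hv : (p : ℕ) = 0 := by rw [hp0]; rfl
        rw [wfac, if_neg hpl, if_pos hp0, if_neg hpl, if_pos hp0, hv, Nat.sub_zero]
        ring
      · rw [wfac, if_neg hpl, if_neg hp0, if_neg hpl, if_neg hp0]
        ring
  rw [Finset.sum_congr rfl fun p _ => hterm p, Finset.sum_add_distrib,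
    Finset.sum_add_distrib, Fintype.sum_ite_eq' (Fin.last n) (fun _ => (X 1 : MvPolynomial (Fin 3) ℤ) - 1),
    Fintype.sum_ite_eq' (0 : Fin (n + 1)) (fun _ => ((X 2 : MvPolynomial (Fin 3) ℤ) - 1) * X 0 ^ n)]
  have hrev : (∑ p : Fin (n + 1), (X 0 : MvPolynomial (Fin 3) ℤ) ^ (n - (p : ℕ))) =
      ∑ t ∈ Finset.range (n + 1), (X 0 : MvPolynomial (Fin 3) ℤ) ^ t := by
    rw [Fin.sum_univ_eq_sum_range (fun i => (X 0 : MvPolynomial (Fin 3) ℤ) ^ (n - i)) (n + 1)]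
    exact Finset.sum_range_reflect (fun t => (X 0 : MvPolynomial (Fin 3) ℤ) ^ t) (n + 1)
  rw [hrev]
  ring

lemma perm_one_stats :
    inv (1 : Perm (Fin 1)) = 0 ∧ rmin (1 : Perm (Fin 1)) = 1 ∧ lmin (1 : Perm (Fin 1)) = 1 ∧
      sor (1 : Perm (Fin 1)) = 0 ∧ cyc (1 : Perm (Fin 1)) = 1 ∧
        lmic1 (1 : Perm (Fin 1)) = 1 := by
  have hnolt : ∀ a b : Fin 1, ¬a < b := by
    intro a b h
    rw [Subsingleton.elim a b] at h
    exact lt_irrefl b h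
  refine ⟨?_, ?_, ?_, ?_, ?_, ?_⟩
  · rw [inv, Finset.card_eq_zero, Finset.filter_eq_empty_iff]
    rintro p - ⟨h, -⟩
    exact hnolt _ _ h
  · rw [rmin_eq_card, RmipSet, Finset.filter_true_of_mem, Finset.card_univ,
      Fintype.card_fin]
    intro i _ j hj
    exact absurd hj (hnolt _ _)
  · rw [lmin_eq_card, LmipSet, Finset.filter_true_of_mem, Finset.card_univ,
      Fintype.card_fin]
    intro i _ j hj
    exact absurd hj (hnolt _ _)
  · rw [sor, sorAux_one]
  · rw [cyc, CycSet, Finset.filter_true_of_mem, Finset.card_univ, Fintype.card_fin]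
    intro i _ k
    rw [one_pow, Equiv.Perm.one_apply]
  · rw [lmic1, Lmic1Set, Oset, Finset.filter_true_of_mem, Finset.card_univ,
      Fintype.card_fin]
    intro i _
    rw [BcodeNat, bcode_eq (1 : Perm (Fin 1)) Nat.one_pos (by simp)
      (fun l h0 hl => absurd h0 (by omega)), inv_one, one_pow, Equiv.Perm.one_apply]
    rw [Subsingleton.elim i 0]
    rfl

lemma sum_base (w : Perm (Fin 1) → MvPolynomial (Fin 3) ℤ) (c : MvPolynomial (Fin 3) ℤ)
    (hw : w 1 = c) : (∑ σ : Perm (Fin 1), w σ) = c := by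
  have h1 : ∀ σ : Perm (Fin 1), σ = 1 := fun σ => Equiv.ext fun x => Subsingleton.elim _ _
  have h2 : (∑ σ : Perm (Fin 1), w σ) = ∑ _σ : Perm (Fin 1), w 1 :=
    Finset.sum_congr rfl fun σ _ => by rw [h1 σ]
  rw [h2, Finset.sum_const, Finset.card_univ, Fintype.card_perm, Fintype.card_fin]
  simp [hw]

end

end SortIdxAux

open MvPolynomial in
/-- Theorem 1.3(2), generating function.  In `ℤ[q,x,y]`
(`q = X 0`, `x = X 1`, `y = X 2`):
`∑_σ q^{inv} x^{rmin} y^{lmin} = ∑_σ q^{sor} x^{cyc} y^{lmic₁}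
  = xy ∏_{r=2}^n (x + [r]_q + y q^{r-1} - 1 - q^{r-1})`. -/
theorem genfun_three_variables (n : ℕ) (hn : 1 ≤ n) :
    (∑ σ : Equiv.Perm (Fin n),
        (X 0 : MvPolynomial (Fin 3) ℤ) ^ SortIdx.inv σ * X 1 ^ SortIdx.rmin σ *
          X 2 ^ SortIdx.lmin σ) =
      (∑ σ : Equiv.Perm (Fin n),
        (X 0 : MvPolynomial (Fin 3) ℤ) ^ SortIdx.sor σ * X 1 ^ SortIdx.cyc σ *
          X 2 ^ SortIdx.lmic1 σ) ∧
    (∑ σ : Equiv.Perm (Fin n),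
        (X 0 : MvPolynomial (Fin 3) ℤ) ^ SortIdx.sor σ * X 1 ^ SortIdx.cyc σ *
          X 2 ^ SortIdx.lmic1 σ) =
      X 1 * X 2 * ∏ r ∈ Finset.Icc 2 n,
        (X 1 + (∑ t ∈ Finset.range r, (X 0 : MvPolynomial (Fin 3) ℤ) ^ t) +
          X 2 * X 0 ^ (r - 1) - 1 - X 0 ^ (r - 1)) := by
  suffices h : ∀ m : ℕ, 1 ≤ m →
      ((∑ σ : Equiv.Perm (Fin m),
          (X 0 : MvPolynomial (Fin 3) ℤ) ^ SortIdx.inv σ * X 1 ^ SortIdx.rmin σ *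
            X 2 ^ SortIdx.lmin σ) =
        X 1 * X 2 * ∏ r ∈ Finset.Icc 2 m,
          (X 1 + (∑ t ∈ Finset.range r, (X 0 : MvPolynomial (Fin 3) ℤ) ^ t) +
            X 2 * X 0 ^ (r - 1) - 1 - X 0 ^ (r - 1))) ∧
      ((∑ σ : Equiv.Perm (Fin m),
          (X 0 : MvPolynomial (Fin 3) ℤ) ^ SortIdx.sor σ * X 1 ^ SortIdx.cyc σ *
            X 2 ^ SortIdx.lmic1 σ) =
        X 1 * X 2 * ∏ r ∈ Finset.Icc 2 m,
          (X 1 + (∑ t ∈ Finset.range r, (X 0 : MvPolynomial (Fin 3) ℤ) ^ t) +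
            X 2 * X 0 ^ (r - 1) - 1 - X 0 ^ (r - 1))) by
    obtain ⟨h1, h2⟩ := h n hn
    exact ⟨h1.trans h2.symm, h2⟩
  intro m hm
  induction m, hm using Nat.le_induction with
  | base =>
    constructor
    · refine SortIdxAux.sum_base _ _ ?_
      rw [SortIdxAux.perm_one_stats.1, SortIdxAux.perm_one_stats.2.1,
        SortIdxAux.perm_one_stats.2.2.1, Finset.Icc_eq_empty (by omega),
        Finset.prod_empty, mul_one]
      ring
    · refine SortIdxAux.sum_base _ _ ?_
      rw [SortIdxAux.perm_one_stats.2.2.2.1, SortIdxAux.perm_one_stats.2.2.2.2.1,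
        SortIdxAux.perm_one_stats.2.2.2.2.2, Finset.Icc_eq_empty (by omega),
        Finset.prod_empty, mul_one]
      ring
  | succ m hm ih =>
    constructor
    · rw [Finset.prod_Icc_succ_top (show 2 ≤ m + 1 by omega)]
      simp only [Nat.add_sub_cancel]
      rw [SortIdxAux.sum_inv_side, ih.1, SortIdxAux.wfac_sum m hm]
      ring
    · rw [Finset.prod_Icc_succ_top (show 2 ≤ m + 1 by omega)]
      simp only [Nat.add_sub_cancel]
      rw [SortIdxAux.sum_sor_side, ih.2, SortIdxAux.wfac_sum m hm]
      ring
end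

section
/- Let σ ∈ S_n, let m be the length of the cycle of σ containing 1, and let w = (w_1, …, w_m) be the word obtained by writing that cycle so that 1 is the last letter, i.e. w_t = σ^t(1) for 1 ≤ t ≤ m (so w_m = 1). Then Lmic1(σ) equals the set of left-to-right minimum letters of the word w, namely {w_t : w_t < w_s for all s < t}. -/
open scoped Classical

private lemma inv_pow_apply_pow {n : ℕ} (σ : Equiv.Perm (Fin n)) (k t : ℕ) (hk : k ≤ t)
    (x : Fin n) : (σ⁻¹ ^ k) ((σ ^ t) x) = (σ ^ (t - k)) x := by
  have h : σ ^ t = σ ^ k * σ ^ (t - k) := by rw [← pow_add]; congr 1; omega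
  rw [h, inv_pow, Equiv.Perm.mul_apply, Equiv.Perm.inv_def, Equiv.symm_apply_apply]

/-- Lemma 2.2.  Writing the cycle of `σ` containing the
smallest letter as the word `w_t = σ^t 1` for `1 ≤ t ≤ m` (`m` the length of
that cycle, so `w_m = 1`), `Lmic₁ σ` is the set of left-to-right minimum
letters of this word. -/
theorem lmic1_eq_lmil_of_shifted_cycle (n : ℕ) (hn : 0 < n) (σ : Equiv.Perm (Fin n)) :
    SortIdx.Lmic1Set σ =
      ((Finset.Icc 1 (Function.minimalPeriod (⇑σ) ⟨0, hn⟩)).filter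
          (fun t => ∀ s ∈ Finset.Icc 1 (Function.minimalPeriod (⇑σ) ⟨0, hn⟩),
            s < t → (σ ^ t) ⟨0, hn⟩ < (σ ^ s) ⟨0, hn⟩)).image
        (fun t => (σ ^ t) ⟨0, hn⟩) := by
  classical
  set z : Fin n := ⟨0, hn⟩ with hz
  have hzle : ∀ x : Fin n, z ≤ x := fun x => by simp [hz, Fin.le_def]
  set m := Function.minimalPeriod (⇑σ) z with hm
  have hmem : z ∈ Function.periodicPts ⇑σ := by
    refine ⟨orderOf σ, orderOf_pos σ, ?_⟩
    show (⇑σ)^[orderOf σ] z = z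
    rw [← Equiv.Perm.coe_pow, pow_orderOf_eq_one]; rfl
  have hmpos : 0 < m := Function.minimalPeriod_pos_of_mem_periodicPts hmem
  have hperiod : (σ ^ m) z = z := by
    have h := Function.iterate_minimalPeriod (f := ⇑σ) (x := z)
    rwa [← Equiv.Perm.coe_pow] at h
  have hmod : ∀ k : ℕ, (σ ^ (k % m)) z = (σ ^ k) z := by
    intro k
    have h := Function.iterate_mod_minimalPeriod_eq (f := ⇑σ) (x := z) (n := k)
    rwa [← Equiv.Perm.coe_pow, ← Equiv.Perm.coe_pow] at h
  have hinvz : ∀ (t : ℕ) (i : Fin n), (σ ^ t) z = i → (σ⁻¹ ^ t) i = z := by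
    intro t i hti
    rw [← hti, inv_pow_apply_pow σ t t le_rfl, Nat.sub_self, pow_zero]
    simp
  ext i
  simp only [SortIdx.Lmic1Set, SortIdx.Oset, Finset.mem_filter,
    Finset.mem_univ, true_and, Finset.mem_image, Finset.mem_Icc]
  simp only [SortIdx.BcodeNat]
  obtain ⟨k, hk⟩ : ∃ k, Nat.find (SortIdx.bcode_exists σ i) = k := ⟨_, rfl⟩
  have hspec : 0 < k ∧ (σ⁻¹ ^ k) i ≤ i := by
    rw [← hk]; exact Nat.find_spec (SortIdx.bcode_exists σ i)
  have hkpos : 0 < k := hspec.1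
  have hble : ∀ t : ℕ, 0 < t → (σ ^ t) z = i → k ≤ t := by
    intro t ht hti
    rw [← hk]
    apply Nat.find_min'
    exact ⟨ht, by rw [hinvz t i hti]; exact hzle i⟩
  have hbmin : ∀ j : ℕ, j < k → ¬(0 < j ∧ (σ⁻¹ ^ j) i ≤ i) := by
    intro j hj
    exact Nat.find_min (SortIdx.bcode_exists σ i) (by omega)
  have hbcode : SortIdx.Bcode σ i = (σ⁻¹ ^ k) i := by
    rw [SortIdx.Bcode, hk]
  constructor
  · intro h
    have hbk : (σ⁻¹ ^ k) i = z := by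
      rw [← hbcode]
      exact Fin.ext (by omega : ((SortIdx.Bcode σ i : Fin n) : ℕ) = 0)
    rw [inv_pow] at hbk
    have hiz : i = (σ ^ k) z := (Equiv.Perm.inv_eq_iff_eq).mp hbk
    have hkm : k ≤ m := by
      rcases Nat.eq_zero_or_pos (k % m) with hr | hr
      · refine hble m hmpos ?_
        rw [hperiod, hiz, ← hmod k, hr, pow_zero]
        simp
      · refine le_trans (hble (k % m) hr ?_) (le_of_lt (Nat.mod_lt _ hmpos))
        rw [hmod k, hiz]
    refine ⟨k, ⟨⟨hkpos, hkm⟩, ?_⟩, hiz.symm⟩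
    intro s hs hsk
    by_contra hle
    push_neg at hle
    have hks : k - (k - s) = s := by omega
    have hsub : (σ⁻¹ ^ (k - s)) i = (σ ^ s) z := by
      rw [hiz, inv_pow_apply_pow σ (k - s) k (Nat.sub_le _ _), hks]
    refine hbmin (k - s) (by omega) ⟨by omega, ?_⟩
    rw [hsub, hiz]
    exact hle
  · rintro ⟨t, ⟨⟨h1t, htm⟩, hmin⟩, hti⟩
    have hkt : k ≤ t := hble t h1t hti
    have hkeq : k = t := by
      rcases lt_or_eq_of_le hkt with hlt | he
      · exfalso
        have hsub : (σ⁻¹ ^ k) i = (σ ^ (t - k)) z := by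
          rw [← hti, inv_pow_apply_pow σ k t (le_of_lt hlt)]
        have hs : (σ ^ t) z < (σ ^ (t - k)) z :=
          hmin (t - k) ⟨by omega, by omega⟩ (by omega)
        have h2 := hspec.2
        rw [hsub, ← hti] at h2
        exact absurd hs (not_lt.mpr h2)
      · exact he
    have hbz : SortIdx.Bcode σ i = z := by
      rw [hbcode, hkeq]
      exact hinvz t i hti
    rw [hbz]
end
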